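/- arXiv:2402.11284 — 5 statements merged into one kernel-verified Lean document; each statement's English description precedes it below -/
import Mathlib

section
/- Let $X$ be a complete separable metric space equipped with a Radon measure $\mu$ finite on bounded sets. A family $\Gamma_0$ of curve fragments (bi-Lipschitz maps $\gamma:K\to X$ from compact sets $K\subset\mathbb{R}$) has $\infty$-modulus zero if and only if there exists a Borel set $N\subset X$ with $\mu(N)=0$ such that every $\gamma\in\Gamma_0$ satisfies $\mathcal{H}^1(N\cap\operatorname{im}(\gamma))>0$. -/
open MeasureTheory Filter Topology Set
open scoped ENNReal NNReal

/-- A curve fragment: a bi-Lipschitz map from a nonempty compact subset of `ℝ` into `X`. -/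
structure CurveFragment (X : Type*) [MetricSpace X] where
  toFun : ℝ → X
  dom : Set ℝ
  compact : IsCompact dom
  nonempty : dom.Nonempty
  biLip : ∃ L : ℝ, 0 < L ∧ ∀ s ∈ dom, ∀ t ∈ dom,
    L⁻¹ * |s - t| ≤ dist (toFun s) (toFun t) ∧ dist (toFun s) (toFun t) ≤ L * |s - t|

namespace CurveFragment

variable {X : Type*} [MetricSpace X]

/-- The image of a curve fragment. -/
def im (γ : CurveFragment X) : Set X := γ.toFun '' γ.dom

/-- The pairs `(a, b)` of endpoints of the gaps of a curve fragment: maximal open intervals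
in the convex hull of the domain that do not meet the domain. -/
def gapPairs (γ : CurveFragment X) : Set (ℝ × ℝ) :=
  {p | p.1 ∈ γ.dom ∧ p.2 ∈ γ.dom ∧ p.1 < p.2 ∧ Set.Ioo p.1 p.2 ∩ γ.dom = ∅}

/-- `gap(γ)`: the sum of `d(γ(aᵢ), γ(bᵢ))` over the gaps `(aᵢ, bᵢ)` of `γ`. -/
noncomputable def gapLength (γ : CurveFragment X) : ℝ≥0∞ :=
  ∑' p : γ.gapPairs, edist (γ.toFun (p : ℝ × ℝ).1) (γ.toFun (p : ℝ × ℝ).2)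

end CurveFragment

/-- The (global) Lipschitz constant `LIP(f)` of `f`, as an element of `ℝ≥0∞`. -/
noncomputable def eLipConst {X : Type*} [MetricSpace X] (f : X → ℝ) : ℝ≥0∞ :=
  ⨅ (K : ℝ≥0) (_ : LipschitzWith K f), (K : ℝ≥0∞)

variable {X : Type*} [MetricSpace X] [MeasurableSpace X] [BorelSpace X]

/-- The `∞`-modulus of a family of curve fragments. -/
noncomputable def ModInfty (μ : Measure X) (Γ : Set (CurveFragment X)) : ℝ≥0∞ :=
  ⨅ (ρ : X → ℝ≥0∞) (_ : Measurable ρ)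
    (_ : ∀ γ ∈ Γ, 1 ≤ ∫⁻ x in γ.im, ρ x ∂(μH[1] : Measure X)), essSup ρ μ

/-- The `∗`-upper gradient inequality
`osc_γ f ≤ ∫_{im γ} g dH¹ + LIP(f) · gap(γ)` along a single curve fragment `γ`. -/
def StarUGIneqOn (f : X → ℝ) (g : X → ℝ≥0∞) (γ : CurveFragment X) : Prop :=
  ∀ s ∈ γ.dom, ∀ t ∈ γ.dom,
    ENNReal.ofReal |f (γ.toFun s) - f (γ.toFun t)| ≤
      (∫⁻ x in γ.im, g x ∂(μH[1] : Measure X)) + eLipConst f * γ.gapLength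

/-- `g` is a `∗`-upper gradient of `f`. -/
def IsStarUG (f : X → ℝ) (g : X → ℝ≥0∞) : Prop :=
  ∀ γ : CurveFragment X, StarUGIneqOn f g γ

/-- `g` is a weak `∗`-upper gradient of `f`: the `∗`-upper gradient inequality holds for all
curve fragments outside a family of `∞`-modulus zero. -/
def IsWeakStarUG (μ : Measure X) (f : X → ℝ) (g : X → ℝ≥0∞) : Prop :=
  ∃ Γ₀ : Set (CurveFragment X), ModInfty μ Γ₀ = 0 ∧
    ∀ γ ∉ Γ₀, StarUGIneqOn f g γ

/-- `D` is a (the) minimal `∗`-upper gradient `|Df|_∗` of `f`: a genuine `∗`-upper gradient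
which is `μ`-a.e. below any weak `∗`-upper gradient lying in `L^∞(μ)`. -/
def IsMinimalStarUG (μ : Measure X) (f : X → ℝ) (D : X → ℝ≥0∞) : Prop :=
  Measurable D ∧ IsStarUG f D ∧
    ∀ g : X → ℝ≥0∞, Measurable g → essSup g μ < ⊤ → IsWeakStarUG μ f g →
      ∀ᵐ x ∂μ, D x ≤ g x

/-- On a complete separable metric space with a Borel measure finite on
bounded sets, a family of curve fragments has `∞`-modulus zero iff there is a Borel
`μ`-null set `N` such that every fragment of the family meets `N` in positive
`H¹`-measure. -/
theorem modInfty_eq_zero_iff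
    [CompleteSpace X] [TopologicalSpace.SeparableSpace X]
    (μ : Measure X) (hμ : ∀ s : Set X, Bornology.IsBounded s → μ s < ⊤)
    (Γ₀ : Set (CurveFragment X)) :
    ModInfty μ Γ₀ = 0 ↔
      ∃ N : Set X, MeasurableSet N ∧ μ N = 0 ∧
        ∀ γ ∈ Γ₀, 0 < (μH[1] : Measure X) (N ∩ γ.im) := by
  constructor
  · intro h
    have hex : ∀ n : ℕ, ∃ ρ : X → ℝ≥0∞, Measurable ρ ∧
        (∀ γ ∈ Γ₀, 1 ≤ ∫⁻ x in γ.im, ρ x ∂(μH[1] : Measure X)) ∧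
        essSup ρ μ < ((n : ℝ≥0∞) + 1)⁻¹ := by
      intro n
      have hpos : (0 : ℝ≥0∞) < ((n : ℝ≥0∞) + 1)⁻¹ := by
        simp [ENNReal.inv_pos]
      have h' : ModInfty μ Γ₀ < ((n : ℝ≥0∞) + 1)⁻¹ := h ▸ hpos
      simp only [ModInfty, iInf_lt_iff] at h'
      obtain ⟨ρ, hm, hadm, hess⟩ := h'
      exact ⟨ρ, hm, hadm, hess⟩
    choose ρ hmeas hadm hess using hex
    set A : ℕ → Set X := fun n => {x | ((n : ℝ≥0∞) + 1)⁻¹ < ρ n x} with hAdef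
    have hA : ∀ n, MeasurableSet (A n) :=
      fun n => measurableSet_lt measurable_const (hmeas n)
    have hAnull : ∀ n, μ (A n) = 0 := by
      intro n
      have hae : ∀ᵐ x ∂μ, ρ n x ≤ essSup (ρ n) μ := ae_le_essSup
      rw [ae_iff] at hae
      refine measure_mono_null ?_ hae
      intro x hx
      simp only [Set.mem_setOf_eq, not_le]
      exact lt_of_lt_of_le (hess n) (le_of_lt hx)
    refine ⟨⋃ n, A n, MeasurableSet.iUnion hA, measure_iUnion_null hAnull, ?_⟩
    intro γ hγ
    by_contra hcon
    have h0 : (μH[1] : Measure X) ((⋃ n, A n) ∩ γ.im) = 0 :=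
      le_antisymm (not_lt.1 hcon) zero_le
    -- H¹ of the image is finite
    obtain ⟨L, hL, hbi⟩ := γ.biLip
    have hlip : LipschitzOnWith L.toNNReal γ.toFun γ.dom := by
      apply LipschitzOnWith.of_dist_le_mul
      intro s hs t ht
      have := (hbi s hs t ht).2
      calc dist (γ.toFun s) (γ.toFun t) ≤ L * |s - t| := this
        _ = (L.toNNReal : ℝ) * dist s t := by
            rw [Real.dist_eq, Real.coe_toNNReal L (le_of_lt hL)]
    have hCfin : (μH[1] : Measure X) γ.im < ⊤ := by
      have h1 : (μH[1] : Measure X) γ.im ≤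
          (L.toNNReal : ℝ≥0∞) ^ (1 : ℝ) * (μH[1] : Measure ℝ) γ.dom :=
        hlip.hausdorffMeasure_image_le zero_le_one
      have h2 : (μH[1] : Measure ℝ) γ.dom < ⊤ := by
        rw [MeasureTheory.hausdorffMeasure_real]
        exact γ.compact.measure_lt_top
      refine lt_of_le_of_lt h1 ?_
      apply ENNReal.mul_lt_top
      · simp [ENNReal.rpow_one]
      · exact h2
    set C : ℝ≥0∞ := (μH[1] : Measure X) γ.im with hC
    obtain ⟨n, hn⟩ := ENNReal.exists_nat_gt hCfin.ne
    have hnC : C < (n : ℝ≥0∞) + 1 := lt_of_lt_of_le hn (by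
      exact_mod_cast le_self_add)
    have hAγ : (μH[1] : Measure X) (A n ∩ γ.im) = 0 :=
      le_antisymm (le_trans (measure_mono (Set.inter_subset_inter_left _
        (Set.subset_iUnion A n))) h0.le) zero_le
    have hptwise : ∀ x, ρ n x ≤ ((n : ℝ≥0∞) + 1)⁻¹ + (A n).indicator (fun _ => ⊤) x := by
      intro x
      by_cases hx : x ∈ A n
      · simp [Set.indicator_of_mem hx]
      · have : ρ n x ≤ ((n : ℝ≥0∞) + 1)⁻¹ := not_lt.1 hx
        exact le_trans this le_self_add
    have hbound : ∫⁻ x in γ.im, ρ n x ∂(μH[1] : Measure X) ≤ ((n : ℝ≥0∞) + 1)⁻¹ * C := by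
      calc ∫⁻ x in γ.im, ρ n x ∂(μH[1] : Measure X)
          ≤ ∫⁻ x in γ.im, (((n : ℝ≥0∞) + 1)⁻¹ + (A n).indicator (fun _ => ⊤) x)
              ∂(μH[1] : Measure X) := lintegral_mono hptwise
        _ = ((n : ℝ≥0∞) + 1)⁻¹ * C +
              ∫⁻ x in γ.im, (A n).indicator (fun _ => ⊤) x ∂(μH[1] : Measure X) := by
            rw [lintegral_add_right _ (Measurable.indicator measurable_const (hA n)),
              lintegral_const, Measure.restrict_apply MeasurableSet.univ, Set.univ_inter]
        _ = ((n : ℝ≥0∞) + 1)⁻¹ * C := by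
            rw [lintegral_indicator (hA n)]
            rw [lintegral_const, Measure.restrict_restrict (hA n),
              Measure.restrict_apply MeasurableSet.univ, Set.univ_inter, hAγ, mul_zero,
              add_zero]
    have h1le : (1 : ℝ≥0∞) ≤ ((n : ℝ≥0∞) + 1)⁻¹ * C := le_trans (hadm n γ hγ) hbound
    have hlt : ((n : ℝ≥0∞) + 1)⁻¹ * C < 1 := by
      have hne0 : ((n : ℝ≥0∞) + 1)⁻¹ ≠ 0 := by
        simp [ENNReal.inv_ne_zero]
      have hnetop : ((n : ℝ≥0∞) + 1)⁻¹ ≠ ⊤ := by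
        simp
      calc ((n : ℝ≥0∞) + 1)⁻¹ * C < ((n : ℝ≥0∞) + 1)⁻¹ * ((n : ℝ≥0∞) + 1) :=
            (ENNReal.mul_lt_mul_iff_right hne0 hnetop).2 hnC
        _ = 1 := ENNReal.inv_mul_cancel (by simp) (by simp)
    exact absurd (lt_of_le_of_lt h1le hlt) (lt_irrefl _)
  · rintro ⟨N, hN, hN0, hposN⟩
    refine le_antisymm ?_ zero_le
    have hle : ModInfty μ Γ₀ ≤ essSup (N.indicator (fun _ => (⊤ : ℝ≥0∞))) μ := by
      refine iInf_le_of_le (N.indicator (fun _ => (⊤ : ℝ≥0∞))) ?_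
      refine iInf_le_of_le (Measurable.indicator measurable_const hN) ?_
      refine iInf_le_of_le ?_ le_rfl
      intro γ hγ
      have : ∫⁻ x in γ.im, N.indicator (fun _ => (⊤ : ℝ≥0∞)) x ∂(μH[1] : Measure X)
          = ⊤ * (μH[1] : Measure X) (N ∩ γ.im) := by
        rw [lintegral_indicator hN, lintegral_const, Measure.restrict_restrict hN,
          Measure.restrict_apply MeasurableSet.univ, Set.univ_inter]
      rw [this, ENNReal.top_mul (hposN γ hγ).ne']
      exact le_top
    have hzero : essSup (N.indicator (fun _ => (⊤ : ℝ≥0∞))) μ ≤ 0 := by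
      refine essSup_le_of_ae_le _ ?_
      have : ∀ᵐ x ∂μ, x ∉ N := by
        rw [ae_iff]
        simpa using hN0
      filter_upwards [this] with x hx
      simp [Set.indicator_of_notMem hx]
    exact le_trans hle (le_trans hzero (le_refl 0))
end

section
/- Let $X$ be a complete separable metric space with Radon measure $\mu$ finite on bounded sets, and $f:X\to\mathbb{R}$ Lipschitz. If $\rho_i\in L^\infty(\mu)$, $i\in\mathbb{N}$, are weak $\ast$-upper gradients of $f$, then $\rho_\infty=\inf_i\rho_i$ is a weak $\ast$-upper gradient of $f$. -/
open MeasureTheory Filter Topology Set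
open scoped ENNReal NNReal

variable {X : Type*} [MetricSpace X] [MeasurableSpace X] [BorelSpace X]

-- AUX START
namespace CurveFragment

variable {X : Type*} [MetricSpace X]

def restrict (γ : CurveFragment X) (C : Set ℝ) (hC : IsCompact C) (hne : C.Nonempty)
    (hsub : C ⊆ γ.dom) : CurveFragment X where
  toFun := γ.toFun
  dom := C
  compact := hC
  nonempty := hne
  biLip := by
    obtain ⟨L, hL0, hL⟩ := γ.biLip
    exact ⟨L, hL0, fun s hs t ht => hL s (hsub hs) t (hsub ht)⟩

@[simp] lemma restrict_dom (γ : CurveFragment X) (C hC hne hsub) :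
    (γ.restrict C hC hne hsub).dom = C := rfl

@[simp] lemma restrict_toFun (γ : CurveFragment X) (C hC hne hsub) :
    (γ.restrict C hC hne hsub).toFun = γ.toFun := rfl

lemma restrict_im (γ : CurveFragment X) (C hC hne hsub) :
    (γ.restrict C hC hne hsub).im = γ.toFun '' C := rfl

lemma restrict_dom_eq (γ : CurveFragment X) (h1 h2 h3) :
    γ.restrict γ.dom h1 h2 h3 = γ := rfl

noncomputable def edistPair (γ : CurveFragment X) (q : ℝ × ℝ) : ℝ≥0∞ :=
  edist (γ.toFun q.1) (γ.toFun q.2)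

noncomputable def gapIn (γ : CurveFragment X) (s t : ℝ) : ℝ≥0∞ :=
  ∑' q : ℝ × ℝ, (γ.gapPairs ∩ {q : ℝ × ℝ | s ≤ q.1 ∧ q.2 ≤ t}).indicator γ.edistPair q

lemma gapLength_eq (γ : CurveFragment X) :
    γ.gapLength = ∑' q : ℝ × ℝ, γ.gapPairs.indicator γ.edistPair q := by
  show (∑' p : γ.gapPairs, γ.edistPair (p : ℝ × ℝ)) = _
  exact tsum_subtype _ _

lemma gapIn_le_gapLength (γ : CurveFragment X) (s t : ℝ) : γ.gapIn s t ≤ γ.gapLength := by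
  rw [gapLength_eq]
  exact ENNReal.tsum_le_tsum fun q =>
    Set.indicator_le_indicator_of_subset inter_subset_left (fun _ => zero_le) q

lemma gapIn_add_gapIn_le (γ : CurveFragment X) {s u v t : ℝ} (hsu : s ≤ u) (huv : u ≤ v)
    (hvt : v ≤ t) : γ.gapIn s u + γ.gapIn v t ≤ γ.gapIn s t := by
  rw [gapIn, gapIn, gapIn, ← ENNReal.tsum_add]
  refine ENNReal.tsum_le_tsum fun q => ?_
  by_cases h1 : q ∈ γ.gapPairs ∩ {q : ℝ × ℝ | s ≤ q.1 ∧ q.2 ≤ u}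
  · have h2 : q ∉ γ.gapPairs ∩ {q : ℝ × ℝ | v ≤ q.1 ∧ q.2 ≤ t} := by
      rintro ⟨hg, hv1, -⟩
      exact absurd h1.1.2.2.1 (not_lt.2 (h1.2.2.trans (huv.trans hv1)))
    have h3 : q ∈ γ.gapPairs ∩ {q : ℝ × ℝ | s ≤ q.1 ∧ q.2 ≤ t} :=
      ⟨h1.1, h1.2.1, h1.2.2.trans (huv.trans hvt)⟩
    rw [Set.indicator_of_mem h1, Set.indicator_of_notMem h2, Set.indicator_of_mem h3, add_zero]
  · rw [Set.indicator_of_notMem h1, zero_add]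
    by_cases h2 : q ∈ γ.gapPairs ∩ {q : ℝ × ℝ | v ≤ q.1 ∧ q.2 ≤ t}
    · have h3 : q ∈ γ.gapPairs ∩ {q : ℝ × ℝ | s ≤ q.1 ∧ q.2 ≤ t} :=
        ⟨h2.1, (hsu.trans (huv.trans h2.2.1)), h2.2.2⟩
      rw [Set.indicator_of_mem h2, Set.indicator_of_mem h3]
    · rw [Set.indicator_of_notMem h2]
      exact zero_le

lemma gapIn_add_edist_le (γ : CurveFragment X) {s u v t : ℝ} (hsu : s ≤ u) (huv : u < v)
    (hvt : v ≤ t) (hgap : (u, v) ∈ γ.gapPairs) :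
    γ.gapIn s u + γ.edistPair (u, v) + γ.gapIn v t ≤ γ.gapIn s t := by
  classical
  have hmem : ((u, v) : ℝ × ℝ) ∈ γ.gapPairs ∩ {q : ℝ × ℝ | s ≤ q.1 ∧ q.2 ≤ t} :=
    ⟨hgap, hsu, hvt⟩
  rw [show γ.gapIn s t = ∑' q : ℝ × ℝ,
      (γ.gapPairs ∩ {q : ℝ × ℝ | s ≤ q.1 ∧ q.2 ≤ t}).indicator γ.edistPair q from rfl,
    ENNReal.tsum_eq_add_tsum_ite ((u, v) : ℝ × ℝ), Set.indicator_of_mem hmem]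
  have step : γ.gapIn s u + γ.edistPair (u, v) + γ.gapIn v t
      = γ.edistPair (u, v) + (γ.gapIn s u + γ.gapIn v t) := by ring
  rw [step]
  refine add_le_add_right ?_ _
  rw [gapIn, gapIn, ← ENNReal.tsum_add]
  refine ENNReal.tsum_le_tsum fun q => ?_
  by_cases hq : q = ((u, v) : ℝ × ℝ)
  · subst hq
    have h1 : ((u, v) : ℝ × ℝ) ∉ γ.gapPairs ∩ {q : ℝ × ℝ | s ≤ q.1 ∧ q.2 ≤ u} := by
      rintro ⟨-, -, h⟩; exact absurd h (not_le.2 huv)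
    have h2 : ((u, v) : ℝ × ℝ) ∉ γ.gapPairs ∩ {q : ℝ × ℝ | v ≤ q.1 ∧ q.2 ≤ t} := by
      rintro ⟨-, h, -⟩; exact absurd h (not_le.2 huv)
    rw [if_pos rfl, Set.indicator_of_notMem h1, Set.indicator_of_notMem h2, add_zero]
  · rw [if_neg hq]
    by_cases h1 : q ∈ γ.gapPairs ∩ {q : ℝ × ℝ | s ≤ q.1 ∧ q.2 ≤ u}
    · have h2 : q ∉ γ.gapPairs ∩ {q : ℝ × ℝ | v ≤ q.1 ∧ q.2 ≤ t} := by
        rintro ⟨hg, hv1, -⟩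
        exact absurd h1.1.2.2.1 (not_lt.2 (h1.2.2.trans (huv.le.trans hv1)))
      have h3 : q ∈ γ.gapPairs ∩ {q : ℝ × ℝ | s ≤ q.1 ∧ q.2 ≤ t} :=
        ⟨h1.1, h1.2.1, h1.2.2.trans (huv.le.trans hvt)⟩
      rw [Set.indicator_of_mem h1, Set.indicator_of_notMem h2, Set.indicator_of_mem h3,
        add_zero]
    · rw [Set.indicator_of_notMem h1, zero_add]
      by_cases h2 : q ∈ γ.gapPairs ∩ {q : ℝ × ℝ | v ≤ q.1 ∧ q.2 ≤ t}
      · have h3 : q ∈ γ.gapPairs ∩ {q : ℝ × ℝ | s ≤ q.1 ∧ q.2 ≤ t} :=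
          ⟨h2.1, (hsu.trans (huv.le.trans h2.2.1)), h2.2.2⟩
        rw [Set.indicator_of_mem h2, Set.indicator_of_mem h3]
      · rw [Set.indicator_of_notMem h2]
        exact zero_le

lemma gapLength_restrict_le (γ : CurveFragment X) {s t : ℝ} {C : Set ℝ} (hC : IsCompact C)
    (hne : C.Nonempty) (hsub : C ⊆ γ.dom) (hCd : C = γ.dom ∩ Icc s t) :
    (γ.restrict C hC hne hsub).gapLength ≤ γ.gapIn s t := by
  rw [gapLength_eq, gapIn]
  refine ENNReal.tsum_le_tsum fun q => ?_
  refine Set.indicator_le_indicator_of_subset ?_ (fun _ => zero_le) q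
  rintro ⟨a, b⟩ ⟨ha, hb, hab, hio⟩
  have haC : a ∈ γ.dom ∩ Icc s t := hCd ▸ ha
  have hbC : b ∈ γ.dom ∩ Icc s t := hCd ▸ hb
  refine ⟨⟨haC.1, hbC.1, hab, ?_⟩, haC.2.1, hbC.2.2⟩
  ext x
  simp only [Set.mem_inter_iff, Set.mem_Ioo, Set.mem_empty_iff_false, iff_false, not_and]
  intro hx hxd
  have hxC : x ∈ C := by
    rw [hCd]
    exact ⟨hxd, haC.2.1.trans hx.1.le, hx.2.le.trans hbC.2.2⟩
  have h0 := hio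
  rw [Set.eq_empty_iff_forall_notMem] at h0
  exact h0 x ⟨hx, hxC⟩

lemma injOn (γ : CurveFragment X) : Set.InjOn γ.toFun γ.dom := by
  obtain ⟨L, hL0, hL⟩ := γ.biLip
  intro s hs t ht hst
  by_contra h
  have h1 := (hL s hs t ht).1
  rw [hst, dist_self] at h1
  have : |s - t| ≤ 0 := by
    by_contra h2
    push_neg at h2
    nlinarith [inv_pos.2 hL0]
  have : s = t := by
    have := abs_nonpos_iff.1 this
    linarith [sub_eq_zero.1 this]
  exact h this

lemma lipschitzOnWith (γ : CurveFragment X) {L : ℝ} (hL0 : 0 < L)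
    (hL : ∀ s ∈ γ.dom, ∀ t ∈ γ.dom, dist (γ.toFun s) (γ.toFun t) ≤ L * |s - t|)
    {S : Set ℝ} (hS : S ⊆ γ.dom) : LipschitzOnWith (Real.toNNReal L) γ.toFun S := by
  refine LipschitzOnWith.of_dist_le_mul fun x hx y hy => ?_
  have := hL x (hS hx) y (hS hy)
  rwa [Real.coe_toNNReal L hL0.le, Real.dist_eq]

lemma continuousOn (γ : CurveFragment X) : ContinuousOn γ.toFun γ.dom := by
  obtain ⟨L, hL0, hL⟩ := γ.biLip
  exact (γ.lipschitzOnWith hL0 (fun s hs t ht => (hL s hs t ht).2) subset_rfl).continuousOn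

end CurveFragment

set_option linter.unusedSectionVars false
section MeasAux

variable {X : Type*} [MetricSpace X] [MeasurableSpace X] [BorelSpace X]

namespace CurveFragment

lemma image_H1_le (γ : CurveFragment X) {L : ℝ} (hL0 : 0 < L)
    (hL : ∀ s ∈ γ.dom, ∀ t ∈ γ.dom, dist (γ.toFun s) (γ.toFun t) ≤ L * |s - t|)
    {S : Set ℝ} (hS : S ⊆ γ.dom) :
    μH[1] (γ.toFun '' S) ≤ ENNReal.ofReal L * volume S := by
  have hlip : LipschitzOnWith (Real.toNNReal L) γ.toFun S := γ.lipschitzOnWith hL0 hL hS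
  have h := hlip.hausdorffMeasure_image_le (zero_le_one (α := ℝ))
  rw [ENNReal.rpow_one] at h
  refine h.trans ?_
  rw [MeasureTheory.hausdorffMeasure_real]
  gcongr
  simp [ENNReal.ofReal]

lemma measurable_dom_inter_preimage (γ : CurveFragment X) {E : Set X} (hE : MeasurableSet E) :
    MeasurableSet (γ.dom ∩ γ.toFun ⁻¹' E) := by
  have h1 : MeasurableSet γ.dom := γ.compact.measurableSet
  have h2 : Measurable (γ.dom.restrict γ.toFun) := γ.continuousOn.restrict.measurable
  have h3 : MeasurableSet (γ.dom.restrict γ.toFun ⁻¹' E) := h2 hE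
  have h4 := h1.subtype_image h3
  convert h4 using 1
  ext x
  constructor
  · rintro ⟨hxd, hxE⟩
    exact ⟨⟨x, hxd⟩, hxE, rfl⟩
  · rintro ⟨⟨y, hyd⟩, hyE, rfl⟩
    exact ⟨hyd, hyE⟩

end CurveFragment

lemma lintegral_union_le_of_null {μ : Measure X} (g : X → ℝ≥0∞) {P Q : Set X}
    (hP : MeasurableSet P) (hQ : MeasurableSet Q) (h0 : μ (P ∩ Q) = 0) :
    (∫⁻ x in P, g x ∂μ) + ∫⁻ x in Q, g x ∂μ ≤ ∫⁻ x in P ∪ Q, g x ∂μ := by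
  have h1 : (∫⁻ x in Q ∩ P, g x ∂μ) + ∫⁻ x in Q \ P, g x ∂μ = ∫⁻ x in Q, g x ∂μ :=
    lintegral_inter_add_diff g Q hP
  have h2 : (∫⁻ x in Q ∩ P, g x ∂μ) = 0 :=
    setLIntegral_measure_zero _ _ (by rwa [Set.inter_comm] at h0)
  have h3 : (∫⁻ x in Q, g x ∂μ) = ∫⁻ x in Q \ P, g x ∂μ := by rw [← h1, h2, zero_add]
  rw [h3, ← lintegral_union (hQ.diff hP) disjoint_sdiff_self_right, Set.union_diff_self]

lemma pair_vol_zero (a b : ℝ) : volume ({a, b} : Set ℝ) = 0 := by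
  have : ({a, b} : Set ℝ) ⊆ {a} ∪ {b} := by simp [Set.insert_subset_iff]
  refine measure_mono_null this ?_
  rw [measure_union_null_iff]
  constructor <;> exact Real.volume_singleton

end MeasAux

section LipAux

variable {X : Type*} [MetricSpace X]

lemma exists_eLipConst (f : X → ℝ) (hf : ∃ K : ℝ≥0, LipschitzWith K f) :
    ∃ K₀ : ℝ≥0, LipschitzWith K₀ f ∧ (K₀ : ℝ≥0∞) = eLipConst f := by
  obtain ⟨K, hK⟩ := hf
  have hne : eLipConst f ≤ (K : ℝ≥0∞) := by
    refine iInf_le_of_le K ?_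
    exact iInf_le_of_le hK le_rfl
  have htop : eLipConst f ≠ ⊤ := (hne.trans_lt ENNReal.coe_lt_top).ne
  refine ⟨(eLipConst f).toNNReal, ?_, ENNReal.coe_toNNReal htop⟩
  rw [lipschitzWith_iff_dist_le_mul]
  intro x y
  by_contra hcon
  push_neg at hcon
  have hd0 : (0 : ℝ) ≤ dist x y := dist_nonneg
  have hdne : dist x y ≠ 0 := by
    intro h
    rw [h, mul_zero] at hcon
    have := hK.dist_le_mul x y
    rw [show dist x y = 0 from h, mul_zero] at this
    exact absurd (this.trans_lt hcon) (lt_irrefl _)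
  have hdpos : 0 < dist x y := lt_of_le_of_ne hd0 (Ne.symm hdne)
  set r : ℝ := dist (f x) (f y) / dist x y with hr
  have hrK : ∀ K' : ℝ≥0, LipschitzWith K' f → r ≤ (K' : ℝ) := by
    intro K' hK'
    rw [div_le_iff₀ hdpos]
    exact hK'.dist_le_mul x y
  have hofr : ENNReal.ofReal r ≤ eLipConst f := by
    refine le_iInf fun K' => le_iInf fun hK' => ?_
    calc ENNReal.ofReal r ≤ ENNReal.ofReal (K' : ℝ) := ENNReal.ofReal_le_ofReal (hrK K' hK')
      _ = (K' : ℝ≥0∞) := ENNReal.ofReal_coe_nnreal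
  have h2 : ENNReal.ofReal r ≤ ((eLipConst f).toNNReal : ℝ≥0∞) := by
    rwa [ENNReal.coe_toNNReal htop]
  have h3 : r ≤ ((eLipConst f).toNNReal : ℝ) := by
    rw [← ENNReal.ofReal_coe_nnreal] at h2
    exact (ENNReal.ofReal_le_ofReal_iff (by positivity)).1 h2
  have h4 : dist (f x) (f y) ≤ ((eLipConst f).toNNReal : ℝ) * dist x y := by
    rw [← div_le_iff₀ hdpos]
    exact h3
  exact absurd (h4.trans_lt hcon) (lt_irrefl _)

lemma ofReal_abs_sub_le_eLip (f : X → ℝ) (hf : ∃ K : ℝ≥0, LipschitzWith K f) (x y : X) :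
    ENNReal.ofReal |f x - f y| ≤ eLipConst f * edist x y := by
  obtain ⟨K₀, hK₀, hc⟩ := exists_eLipConst f hf
  rw [← hc]
  have h := hK₀ x y
  rwa [edist_dist (f x) (f y), Real.dist_eq] at h

end LipAux

section BlockAux

set_option linter.unusedSectionVars false

variable {X : Type*} [MetricSpace X] [MeasurableSpace X] [BorelSpace X]

open CurveFragment

lemma block_bound (γ : CurveFragment X) {L : ℝ} (hL0 : 0 < L)
    (hL : ∀ s ∈ γ.dom, ∀ t ∈ γ.dom, dist (γ.toFun s) (γ.toFun t) ≤ L * |s - t|)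
    (g gm : X → ℝ≥0∞) (M : ℝ≥0∞)
    (hnull : μH[1] (γ.im ∩ {x | M < g x}) = 0)
    {T : Set X} (hT : MeasurableSet T)
    (hgm : ∀ x, x ∉ T → g x ≤ gm x)
    {C : Set ℝ} (hC : IsCompact C) (hCd : C ⊆ γ.dom) :
    (∫⁻ x in γ.toFun '' C, g x ∂(μH[1] : Measure X)) ≤
      (∫⁻ x in γ.toFun '' C, gm x ∂(μH[1] : Measure X))
        + M * (ENNReal.ofReal L * volume (C ∩ γ.toFun ⁻¹' T)) := by
  set S : Set X := γ.toFun '' C with hS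
  have hScomp : IsCompact S := hC.image_of_continuousOn (γ.continuousOn.mono hCd)
  have hSmeas : MeasurableSet S := hScomp.measurableSet
  have hsplit : (∫⁻ x in S ∩ T, g x ∂(μH[1] : Measure X))
      + ∫⁻ x in S \ T, g x ∂(μH[1] : Measure X) = ∫⁻ x in S, g x ∂(μH[1] : Measure X) :=
    lintegral_inter_add_diff g S hT
  -- off T, g ≤ gm
  have h1 : (∫⁻ x in S \ T, g x ∂(μH[1] : Measure X)) ≤
      ∫⁻ x in S, gm x ∂(μH[1] : Measure X) := by
    refine le_trans (setLIntegral_mono' (hSmeas.diff hT) fun x hx => hgm x hx.2) ?_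
    exact lintegral_mono_set diff_subset
  -- on T, g ≤ M a.e.
  have h2 : (∫⁻ x in S ∩ T, g x ∂(μH[1] : Measure X)) ≤ M * μH[1] (S ∩ T) := by
    have hae : ∀ᵐ x ∂((μH[1] : Measure X).restrict (S ∩ T)), g x ≤ M := by
      rw [ae_restrict_iff' (hSmeas.inter hT)]
      have hnull' : μH[1] {x | x ∈ S ∩ T ∧ ¬ g x ≤ M} = 0 := by
        refine measure_mono_null ?_ hnull
        rintro x ⟨⟨hxS, -⟩, hgx⟩
        refine ⟨?_, not_le.1 hgx⟩
        obtain ⟨u, huC, rfl⟩ := hxS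
        exact ⟨u, hCd huC, rfl⟩
      rw [ae_iff]
      refine measure_mono_null (fun x hx => ?_) hnull'
      simp only [mem_setOf_eq, Classical.not_imp] at hx
      exact hx
    calc (∫⁻ x in S ∩ T, g x ∂(μH[1] : Measure X))
        ≤ ∫⁻ _ in S ∩ T, M ∂(μH[1] : Measure X) := lintegral_mono_ae hae
      _ = M * μH[1] (S ∩ T) := setLIntegral_const _ _
  have h3 : μH[1] (S ∩ T) ≤ ENNReal.ofReal L * volume (C ∩ γ.toFun ⁻¹' T) := by
    have himg : S ∩ T = γ.toFun '' (C ∩ γ.toFun ⁻¹' T) := by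
      ext x
      constructor
      · rintro ⟨⟨u, huC, rfl⟩, hxT⟩
        exact ⟨u, ⟨huC, hxT⟩, rfl⟩
      · rintro ⟨u, ⟨huC, huT⟩, rfl⟩
        exact ⟨⟨u, huC, rfl⟩, huT⟩
    rw [himg]
    exact γ.image_H1_le hL0 hL (inter_subset_left.trans hCd)
  calc (∫⁻ x in S, g x ∂(μH[1] : Measure X))
      = (∫⁻ x in S ∩ T, g x ∂(μH[1] : Measure X)) + ∫⁻ x in S \ T, g x ∂(μH[1] : Measure X) :=
        hsplit.symm
    _ ≤ M * μH[1] (S ∩ T) + ∫⁻ x in S, gm x ∂(μH[1] : Measure X) := add_le_add h2 h1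
    _ ≤ M * (ENNReal.ofReal L * volume (C ∩ γ.toFun ⁻¹' T))
        + ∫⁻ x in S, gm x ∂(μH[1] : Measure X) := by gcongr
    _ = _ := by ring

end BlockAux

section ClaimSec

set_option linter.unusedSectionVars false
set_option maxHeartbeats 1000000

variable {X : Type*} [MetricSpace X] [MeasurableSpace X] [BorelSpace X]

open CurveFragment

lemma claim_main (γ : CurveFragment X) (f : X → ℝ) (hf : ∃ K : ℝ≥0, LipschitzWith K f)
    {L : ℝ} (hL0 : 0 < L)
    (hbiU : ∀ s ∈ γ.dom, ∀ t ∈ γ.dom, dist (γ.toFun s) (γ.toFun t) ≤ L * |s - t|)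
    (g₁ g₂ : X → ℝ≥0∞) (M₁ M₂ : ℝ≥0∞)
    (hnull₁ : μH[1] (γ.im ∩ {x | M₁ < g₁ x}) = 0)
    (hnull₂ : μH[1] (γ.im ∩ {x | M₂ < g₂ x}) = 0)
    (hE : MeasurableSet {x | g₂ x < g₁ x})
    (hsub₁ : ∀ C (hC : IsCompact C) (hne : C.Nonempty) (hd : C ⊆ γ.dom),
      StarUGIneqOn f g₁ (γ.restrict C hC hne hd))
    (hsub₂ : ∀ C (hC : IsCompact C) (hne : C.Nonempty) (hd : C ⊆ γ.dom),
      StarUGIneqOn f g₂ (γ.restrict C hC hne hd))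
    (F : Finset (ℝ × ℝ)) (Q : Finset ℝ) :
    ∀ s ∈ γ.dom, ∀ t ∈ γ.dom, s ≤ t →
      (∀ p ∈ F, (p.1 ∈ Set.Ioo s t → p.1 ∈ Q) ∧ (p.2 ∈ Set.Ioo s t → p.2 ∈ Q)) →
      ENNReal.ofReal |f (γ.toFun s) - f (γ.toFun t)| ≤
        (∫⁻ x in γ.toFun '' (γ.dom ∩ Icc s t), (g₁ x ⊓ g₂ x) ∂(μH[1] : Measure X))
        + M₁ * (ENNReal.ofReal L * volume (Ioo s t ∩
            ((⋃ p ∈ F, Ioo p.1 p.2) \ (γ.dom \ γ.toFun ⁻¹' {x | g₂ x < g₁ x}))))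
        + M₂ * (ENNReal.ofReal L * volume (Ioo s t ∩
            ((γ.dom \ γ.toFun ⁻¹' {x | g₂ x < g₁ x}) \ ⋃ p ∈ F, Ioo p.1 p.2)))
        + eLipConst f * γ.gapIn s t := by
  classical
  induction Q using Finset.strongInduction with
  | _ Q ih =>
  intro s hs t ht hst hFQ
  set E := {x | g₂ x < g₁ x} with hEdef
  set A := γ.dom \ γ.toFun ⁻¹' E with hAdef
  set V := ⋃ p ∈ F, Ioo p.1 p.2 with hVdef
  have hAmeas : MeasurableSet A := by
    rw [hAdef, diff_eq, ← Set.preimage_compl]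
    exact γ.measurable_dom_inter_preimage hE.compl
  have hVmeas : MeasurableSet V := by
    rw [hVdef]
    exact (isOpen_biUnion fun _ _ => isOpen_Ioo).measurableSet
  rcases eq_or_lt_of_le hst with rfl | hlt
  · simp
  by_cases hq : ∃ q ∈ Q, q ∈ Set.Ioo s t
  · -- inductive step: split at a cut point
    obtain ⟨q, hqQ, hqI⟩ := hq
    have hCu : IsCompact (γ.dom ∩ Icc s q) := γ.compact.inter_right isClosed_Icc
    have hCv : IsCompact (γ.dom ∩ Icc q t) := γ.compact.inter_right isClosed_Icc
    have hneu : (γ.dom ∩ Icc s q).Nonempty := ⟨s, hs, le_refl s, hqI.1.le⟩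
    have hnev : (γ.dom ∩ Icc q t).Nonempty := ⟨t, ht, hqI.2.le, le_refl t⟩
    set u := sSup (γ.dom ∩ Icc s q) with hudef
    set v := sInf (γ.dom ∩ Icc q t) with hvdef
    have hum : u ∈ γ.dom ∩ Icc s q := hCu.sSup_mem hneu
    have hvm : v ∈ γ.dom ∩ Icc q t := hCv.sInf_mem hnev
    have hsu : s ≤ u := hum.2.1
    have huq : u ≤ q := hum.2.2
    have hqv : q ≤ v := hvm.2.1
    have hvt : v ≤ t := hvm.2.2
    have huv : u ≤ v := huq.trans hqv
    have hgapK : ∀ x ∈ γ.dom, x ∉ Set.Ioo u v := by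
      intro x hxd hx
      rcases le_or_gt x q with h | h
      · have hxm : x ∈ γ.dom ∩ Icc s q := ⟨hxd, (hsu.trans hx.1.le), h⟩
        exact absurd (le_csSup hCu.bddAbove hxm) (not_le.2 hx.1)
      · have hxm : x ∈ γ.dom ∩ Icc q t := ⟨hxd, h.le, hx.2.le.trans hvt⟩
        exact absurd (csInf_le hCv.bddBelow hxm) (not_le.2 hx.2)
    have hQss : Q.erase q ⊂ Q := Finset.erase_ssubset hqQ
    have hsubI₁ : Set.Ioo s u ⊆ Set.Ioo s t := Set.Ioo_subset_Ioo le_rfl (huv.trans hvt)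
    have hsubI₂ : Set.Ioo v t ⊆ Set.Ioo s t := Set.Ioo_subset_Ioo (hsu.trans huv) le_rfl
    have hne₁ : ∀ x ∈ Set.Ioo s u, x ≠ q := fun x hx => ne_of_lt (hx.2.trans_le huq)
    have hne₂ : ∀ x ∈ Set.Ioo v t, x ≠ q := fun x hx => ne_of_gt (hqv.trans_lt hx.1)
    have hFQ₁ : ∀ p ∈ F, (p.1 ∈ Set.Ioo s u → p.1 ∈ Q.erase q) ∧
        (p.2 ∈ Set.Ioo s u → p.2 ∈ Q.erase q) := fun p hp =>
      ⟨fun h => Finset.mem_erase.2 ⟨hne₁ _ h, (hFQ p hp).1 (hsubI₁ h)⟩,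
       fun h => Finset.mem_erase.2 ⟨hne₁ _ h, (hFQ p hp).2 (hsubI₁ h)⟩⟩
    have hFQ₂ : ∀ p ∈ F, (p.1 ∈ Set.Ioo v t → p.1 ∈ Q.erase q) ∧
        (p.2 ∈ Set.Ioo v t → p.2 ∈ Q.erase q) := fun p hp =>
      ⟨fun h => Finset.mem_erase.2 ⟨hne₂ _ h, (hFQ p hp).1 (hsubI₂ h)⟩,
       fun h => Finset.mem_erase.2 ⟨hne₂ _ h, (hFQ p hp).2 (hsubI₂ h)⟩⟩
    have ih₁ := ih (Q.erase q) hQss s hs u hum.1 hsu hFQ₁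
    have ih₂ := ih (Q.erase q) hQss v hvm.1 t ht hvt hFQ₂
    set Lc := ENNReal.ofReal L with hLc
    set κ := eLipConst f with hκ
    set I₁ := ∫⁻ x in γ.toFun '' (γ.dom ∩ Icc s u), (g₁ x ⊓ g₂ x) ∂(μH[1] : Measure X) with hI₁
    set I₂ := ∫⁻ x in γ.toFun '' (γ.dom ∩ Icc v t), (g₁ x ⊓ g₂ x) ∂(μH[1] : Measure X) with hI₂
    set I₀ := ∫⁻ x in γ.toFun '' (γ.dom ∩ Icc s t), (g₁ x ⊓ g₂ x) ∂(μH[1] : Measure X) with hI₀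
    set v₁ := volume (Set.Ioo s u ∩ (V \ A)) with hv₁
    set v₂ := volume (Set.Ioo v t ∩ (V \ A)) with hv₂
    set v₀ := volume (Set.Ioo s t ∩ (V \ A)) with hv₀
    set w₁ := volume (Set.Ioo s u ∩ (A \ V)) with hw₁
    set w₂ := volume (Set.Ioo v t ∩ (A \ V)) with hw₂
    set w₀ := volume (Set.Ioo s t ∩ (A \ V)) with hw₀
    set G₁ := γ.gapIn s u with hG₁
    set G₂ := γ.gapIn v t with hG₂
    set G₀ := γ.gapIn s t with hG₀
    -- integral superadditivity
    have hmeas₁ : MeasurableSet (γ.toFun '' (γ.dom ∩ Icc s u)) :=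
      ((γ.compact.inter_right isClosed_Icc).image_of_continuousOn
        (γ.continuousOn.mono inter_subset_left)).measurableSet
    have hmeas₂ : MeasurableSet (γ.toFun '' (γ.dom ∩ Icc v t)) :=
      ((γ.compact.inter_right isClosed_Icc).image_of_continuousOn
        (γ.continuousOn.mono inter_subset_left)).measurableSet
    have hsets : (γ.dom ∩ Icc s u) ∪ (γ.dom ∩ Icc v t) = γ.dom ∩ Icc s t := by
      ext x
      constructor
      · rintro (⟨hxd, hx1, hx2⟩ | ⟨hxd, hx1, hx2⟩)
        · exact ⟨hxd, hx1, hx2.trans (huv.trans hvt)⟩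
        · exact ⟨hxd, (hsu.trans (huv.trans hx1)), hx2⟩
      · rintro ⟨hxd, hx1, hx2⟩
        rcases le_or_gt x u with h | h
        · exact Or.inl ⟨hxd, hx1, h⟩
        · refine Or.inr ⟨hxd, ?_, hx2⟩
          by_contra hvx
          push_neg at hvx
          exact hgapK x hxd ⟨h, hvx⟩
    have hIunion : γ.toFun '' (γ.dom ∩ Icc s u) ∪ γ.toFun '' (γ.dom ∩ Icc v t)
        = γ.toFun '' (γ.dom ∩ Icc s t) := by
      rw [← Set.image_union, hsets]
    have hnullint : μH[1] (γ.toFun '' (γ.dom ∩ Icc s u) ∩ γ.toFun '' (γ.dom ∩ Icc v t)) = 0 := by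
      have heq2 : γ.toFun '' (γ.dom ∩ Icc s u) ∩ γ.toFun '' (γ.dom ∩ Icc v t)
          = γ.toFun '' ((γ.dom ∩ Icc s u) ∩ (γ.dom ∩ Icc v t)) :=
        (γ.injOn.image_inter inter_subset_left inter_subset_left).symm
      rw [heq2]
      have hsub' : (γ.dom ∩ Icc s u) ∩ (γ.dom ∩ Icc v t) ⊆ ({u} : Set ℝ) := by
        rintro x ⟨⟨-, -, h1⟩, ⟨-, h2, -⟩⟩
        exact Set.mem_singleton_iff.2 (le_antisymm h1 (huv.trans h2))
      have h0 : μH[1] (γ.toFun '' ({u} : Set ℝ)) = 0 := by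
        refine le_antisymm ?_ (zero_le)
        refine (γ.image_H1_le hL0 hbiU (Set.singleton_subset_iff.2 hum.1)).trans ?_
        simp
      exact measure_mono_null (Set.image_mono hsub') h0
    have hIadd : (∫⁻ x in γ.toFun '' (γ.dom ∩ Icc s u), (g₁ x ⊓ g₂ x) ∂(μH[1] : Measure X))
        + (∫⁻ x in γ.toFun '' (γ.dom ∩ Icc v t), (g₁ x ⊓ g₂ x) ∂(μH[1] : Measure X))
        ≤ ∫⁻ x in γ.toFun '' (γ.dom ∩ Icc s t), (g₁ x ⊓ g₂ x) ∂(μH[1] : Measure X) := by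
      rw [← hIunion]
      exact lintegral_union_le_of_null _ hmeas₁ hmeas₂ hnullint
    have hvol : ∀ Z : Set ℝ, MeasurableSet Z →
        volume (Set.Ioo s u ∩ Z) + volume (Set.Ioo v t ∩ Z) ≤ volume (Set.Ioo s t ∩ Z) := by
      intro Z hZ
      have hdisj : Disjoint (Set.Ioo s u ∩ Z) (Set.Ioo v t ∩ Z) := by
        refine Set.disjoint_left.2 ?_
        rintro x ⟨hx1, -⟩ ⟨hx2, -⟩
        exact lt_irrefl x ((hx1.2.trans_le huv).trans hx2.1)
      rw [← measure_union hdisj (measurableSet_Ioo.inter hZ)]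
      refine measure_mono ?_
      rintro x (⟨hx, hz⟩ | ⟨hx, hz⟩)
      · exact ⟨hsubI₁ hx, hz⟩
      · exact ⟨hsubI₂ hx, hz⟩
    have htri : ENNReal.ofReal |f (γ.toFun s) - f (γ.toFun t)| ≤
        ENNReal.ofReal |f (γ.toFun s) - f (γ.toFun u)|
        + ENNReal.ofReal |f (γ.toFun u) - f (γ.toFun v)|
        + ENNReal.ofReal |f (γ.toFun v) - f (γ.toFun t)| := by
      have habs : |f (γ.toFun s) - f (γ.toFun t)| ≤
          |f (γ.toFun s) - f (γ.toFun u)| + |f (γ.toFun u) - f (γ.toFun v)|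
          + |f (γ.toFun v) - f (γ.toFun t)| := by
        calc |f (γ.toFun s) - f (γ.toFun t)|
            ≤ |f (γ.toFun s) - f (γ.toFun u)| + |f (γ.toFun u) - f (γ.toFun t)| :=
              abs_sub_le _ _ _
          _ ≤ |f (γ.toFun s) - f (γ.toFun u)|
              + (|f (γ.toFun u) - f (γ.toFun v)| + |f (γ.toFun v) - f (γ.toFun t)|) :=
              add_le_add_right (abs_sub_le _ _ _) _
          _ = _ := by ring
      calc ENNReal.ofReal |f (γ.toFun s) - f (γ.toFun t)|
          ≤ ENNReal.ofReal (|f (γ.toFun s) - f (γ.toFun u)| + |f (γ.toFun u) - f (γ.toFun v)|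
              + |f (γ.toFun v) - f (γ.toFun t)|) := ENNReal.ofReal_le_ofReal habs
        _ ≤ ENNReal.ofReal (|f (γ.toFun s) - f (γ.toFun u)| + |f (γ.toFun u) - f (γ.toFun v)|)
            + ENNReal.ofReal |f (γ.toFun v) - f (γ.toFun t)| := ENNReal.ofReal_add_le
        _ ≤ _ := add_le_add_left ENNReal.ofReal_add_le _
    have hIadd : I₁ + I₂ ≤ I₀ := by
      rw [hI₁, hI₂, hI₀, ← hIunion]
      exact lintegral_union_le_of_null _ hmeas₁ hmeas₂ hnullint
    have hva : v₁ + v₂ ≤ v₀ := by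
      rw [hv₁, hv₂, hv₀]
      exact hvol (V \ A) (hVmeas.diff hAmeas)
    have hwa : w₁ + w₂ ≤ w₀ := by
      rw [hw₁, hw₂, hw₀]
      exact hvol (A \ V) (hAmeas.diff hVmeas)
    rcases eq_or_lt_of_le huv with heqv | hltuv
    · -- u = v
      have hmid : ENNReal.ofReal |f (γ.toFun u) - f (γ.toFun v)| = 0 := by
        rw [← heqv, sub_self, abs_zero, ENNReal.ofReal_zero]
      have hgap : G₁ + G₂ ≤ G₀ := by
        rw [hG₁, hG₂, hG₀]
        exact γ.gapIn_add_gapIn_le hsu huv hvt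
      refine htri.trans ?_
      rw [hmid, add_zero]
      refine le_trans (add_le_add ih₁ ih₂) ?_
      calc I₁ + M₁ * (Lc * v₁) + M₂ * (Lc * w₁) + κ * G₁
            + (I₂ + M₁ * (Lc * v₂) + M₂ * (Lc * w₂) + κ * G₂)
          = (I₁ + I₂) + M₁ * (Lc * (v₁ + v₂)) + M₂ * (Lc * (w₁ + w₂)) + κ * (G₁ + G₂) := by
            ring
        _ ≤ I₀ + M₁ * (Lc * v₀) + M₂ * (Lc * w₀) + κ * G₀ := by
            gcongr <;> first
              | exact hIadd
              | exact hva
              | exact hwa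
              | exact hgap
    · -- u < v : a genuine gap
      have hgp : ((u, v) : ℝ × ℝ) ∈ γ.gapPairs := by
        refine ⟨hum.1, hvm.1, hltuv, ?_⟩
        ext x
        simp only [Set.mem_inter_iff, Set.mem_empty_iff_false, iff_false, not_and]
        exact fun hx hxd => hgapK x hxd hx
      have hmid : ENNReal.ofReal |f (γ.toFun u) - f (γ.toFun v)| ≤ κ * γ.edistPair (u, v) := by
        rw [hκ]
        exact ofReal_abs_sub_le_eLip f hf _ _
      have hgap : G₁ + γ.edistPair (u, v) + G₂ ≤ G₀ := by
        rw [hG₁, hG₂, hG₀]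
        exact γ.gapIn_add_edist_le hsu hltuv hvt hgp
      refine htri.trans ?_
      refine le_trans (add_le_add (add_le_add ih₁ hmid) ih₂) ?_
      calc I₁ + M₁ * (Lc * v₁) + M₂ * (Lc * w₁) + κ * G₁ + κ * γ.edistPair (u, v)
            + (I₂ + M₁ * (Lc * v₂) + M₂ * (Lc * w₂) + κ * G₂)
          = (I₁ + I₂) + M₁ * (Lc * (v₁ + v₂)) + M₂ * (Lc * (w₁ + w₂))
              + κ * (G₁ + γ.edistPair (u, v) + G₂) := by ring
        _ ≤ I₀ + M₁ * (Lc * v₀) + M₂ * (Lc * w₀) + κ * G₀ := by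
            gcongr <;> first
              | exact hIadd
              | exact hva
              | exact hwa
              | exact hgap
  · -- base case : no cut points inside (s, t)
    push_neg at hq
    have hdich : Set.Ioo s t ⊆ V ∨ Set.Ioo s t ∩ V = ∅ := by
      by_cases hx : ∃ x ∈ Set.Ioo s t, x ∈ V
      · obtain ⟨x, hxI, hxV⟩ := hx
        left
        intro y hyI
        by_contra hyV
        obtain ⟨p, hpF, hxp⟩ := Set.mem_iUnion₂.1 (show x ∈ ⋃ p ∈ F, Set.Ioo p.1 p.2 from hVdef ▸ hxV)
        have hyx : y ≠ x := fun h => hyV (h ▸ hxV)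
        rcases lt_or_gt_of_ne hyx with h | h
        · have hyp : y ≤ p.1 := by
            by_contra hcon
            push_neg at hcon
            exact hyV (Set.mem_iUnion₂.2 ⟨p, hpF, hcon, h.trans hxp.2⟩)
          have hp1 : p.1 ∈ Set.Ioo s t := ⟨hyI.1.trans_le hyp, hxp.1.trans hxI.2⟩
          exact hq p.1 ((hFQ p hpF).1 hp1) hp1
        · have hyp : p.2 ≤ y := by
            by_contra hcon
            push_neg at hcon
            exact hyV (Set.mem_iUnion₂.2 ⟨p, hpF, hxp.1.trans h, hcon⟩)
          have hp2 : p.2 ∈ Set.Ioo s t := ⟨hxI.1.trans hxp.2, hyp.trans_lt hyI.2⟩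
          exact hq p.2 ((hFQ p hpF).2 hp2) hp2
      · right
        push_neg at hx
        ext y
        simp only [Set.mem_inter_iff, Set.mem_empty_iff_false, iff_false, not_and]
        exact hx y
    set C := γ.dom ∩ Icc s t with hCdef
    have hCc : IsCompact C := γ.compact.inter_right isClosed_Icc
    have hCne : C.Nonempty := ⟨s, hs, le_rfl, hst⟩
    have hCd : C ⊆ γ.dom := inter_subset_left
    have hgapR : (γ.restrict C hCc hCne hCd).gapLength ≤ γ.gapIn s t :=
      γ.gapLength_restrict_le hCc hCne hCd hCdef
    rcases hdich with hIn | hOut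
    · -- (s, t) inside V : use g₁
      have key := hsub₁ C hCc hCne hCd s ⟨hs, le_rfl, hst⟩ t ⟨ht, hst, le_rfl⟩
      have hblk := block_bound γ hL0 hbiU g₁ (fun x => g₁ x ⊓ g₂ x) M₁ hnull₁ hE
        (fun x hx => le_inf le_rfl (not_lt.1 hx)) hCc hCd
      have hvol1 : volume (C ∩ γ.toFun ⁻¹' E) ≤ volume (Set.Ioo s t ∩ (V \ A)) := by
        have hsub' : C ∩ γ.toFun ⁻¹' E ⊆ (Set.Ioo s t ∩ (V \ A)) ∪ ({s, t} : Set ℝ) := by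
          rintro x ⟨⟨hxd, hx1, hx2⟩, hxE⟩
          rcases eq_or_lt_of_le hx1 with rfl | h1
          · exact Or.inr (Or.inl rfl)
          rcases eq_or_lt_of_le hx2 with heq | h2
          · exact Or.inr (Or.inr (by simp [heq]))
          exact Or.inl ⟨⟨h1, h2⟩, hIn ⟨h1, h2⟩, fun hA => hA.2 hxE⟩
        calc volume (C ∩ γ.toFun ⁻¹' E)
            ≤ volume ((Set.Ioo s t ∩ (V \ A)) ∪ ({s, t} : Set ℝ)) := measure_mono hsub'
          _ ≤ volume (Set.Ioo s t ∩ (V \ A)) + volume ({s, t} : Set ℝ) := measure_union_le _ _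
          _ = volume (Set.Ioo s t ∩ (V \ A)) := by rw [pair_vol_zero, add_zero]
      have hblk' : (∫⁻ x in γ.toFun '' C, g₁ x ∂(μH[1] : Measure X)) ≤
          (∫⁻ x in γ.toFun '' C, (g₁ x ⊓ g₂ x) ∂(μH[1] : Measure X))
          + M₁ * (ENNReal.ofReal L * volume (C ∩ γ.toFun ⁻¹' E)) := hblk
      calc ENNReal.ofReal |f (γ.toFun s) - f (γ.toFun t)|
          ≤ (∫⁻ x in γ.toFun '' C, g₁ x ∂(μH[1] : Measure X))
            + eLipConst f * (γ.restrict C hCc hCne hCd).gapLength := key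
        _ ≤ ((∫⁻ x in γ.toFun '' C, (g₁ x ⊓ g₂ x) ∂(μH[1] : Measure X))
              + M₁ * (ENNReal.ofReal L * volume (C ∩ γ.toFun ⁻¹' E)))
            + eLipConst f * γ.gapIn s t := add_le_add hblk' (mul_le_mul_right hgapR _)
        _ ≤ ((∫⁻ x in γ.toFun '' C, (g₁ x ⊓ g₂ x) ∂(μH[1] : Measure X))
              + M₁ * (ENNReal.ofReal L * volume (Set.Ioo s t ∩ (V \ A))))
            + eLipConst f * γ.gapIn s t := by
              gcongr
        _ ≤ ((∫⁻ x in γ.toFun '' C, (g₁ x ⊓ g₂ x) ∂(μH[1] : Measure X))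
              + M₁ * (ENNReal.ofReal L * volume (Set.Ioo s t ∩ (V \ A)))
              + M₂ * (ENNReal.ofReal L * volume (Set.Ioo s t ∩ (A \ V))))
            + eLipConst f * γ.gapIn s t := add_le_add (le_add_right le_rfl) le_rfl
        _ = _ := rfl
    · -- (s, t) misses V : use g₂
      have key := hsub₂ C hCc hCne hCd s ⟨hs, le_rfl, hst⟩ t ⟨ht, hst, le_rfl⟩
      have hblk := block_bound γ hL0 hbiU g₂ (fun x => g₁ x ⊓ g₂ x) M₂ hnull₂ hE.compl
        (fun x hx => le_inf (le_of_lt (by simpa [hEdef] using hx)) le_rfl) hCc hCd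
      have hvol2 : volume (C ∩ γ.toFun ⁻¹' Eᶜ) ≤ volume (Set.Ioo s t ∩ (A \ V)) := by
        have hsub' : C ∩ γ.toFun ⁻¹' Eᶜ ⊆ (Set.Ioo s t ∩ (A \ V)) ∪ ({s, t} : Set ℝ) := by
          rintro x ⟨⟨hxd, hx1, hx2⟩, hxE⟩
          rcases eq_or_lt_of_le hx1 with rfl | h1
          · exact Or.inr (Or.inl rfl)
          rcases eq_or_lt_of_le hx2 with heq | h2
          · exact Or.inr (Or.inr (by simp [heq]))
          refine Or.inl ⟨⟨h1, h2⟩, ⟨hxd, hxE⟩, fun hV => ?_⟩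
          have : x ∈ Set.Ioo s t ∩ V := ⟨⟨h1, h2⟩, hV⟩
          rw [hOut] at this
          exact this
        calc volume (C ∩ γ.toFun ⁻¹' Eᶜ)
            ≤ volume ((Set.Ioo s t ∩ (A \ V)) ∪ ({s, t} : Set ℝ)) := measure_mono hsub'
          _ ≤ volume (Set.Ioo s t ∩ (A \ V)) + volume ({s, t} : Set ℝ) := measure_union_le _ _
          _ = volume (Set.Ioo s t ∩ (A \ V)) := by rw [pair_vol_zero, add_zero]
      have hblk' : (∫⁻ x in γ.toFun '' C, g₂ x ∂(μH[1] : Measure X)) ≤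
          (∫⁻ x in γ.toFun '' C, (g₁ x ⊓ g₂ x) ∂(μH[1] : Measure X))
          + M₂ * (ENNReal.ofReal L * volume (C ∩ γ.toFun ⁻¹' Eᶜ)) := hblk
      calc ENNReal.ofReal |f (γ.toFun s) - f (γ.toFun t)|
          ≤ (∫⁻ x in γ.toFun '' C, g₂ x ∂(μH[1] : Measure X))
            + eLipConst f * (γ.restrict C hCc hCne hCd).gapLength := key
        _ ≤ ((∫⁻ x in γ.toFun '' C, (g₁ x ⊓ g₂ x) ∂(μH[1] : Measure X))
              + M₂ * (ENNReal.ofReal L * volume (C ∩ γ.toFun ⁻¹' Eᶜ)))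
            + eLipConst f * γ.gapIn s t := add_le_add hblk' (mul_le_mul_right hgapR _)
        _ ≤ ((∫⁻ x in γ.toFun '' C, (g₁ x ⊓ g₂ x) ∂(μH[1] : Measure X))
              + M₂ * (ENNReal.ofReal L * volume (Set.Ioo s t ∩ (A \ V))))
            + eLipConst f * γ.gapIn s t := by
              gcongr
        _ ≤ ((∫⁻ x in γ.toFun '' C, (g₁ x ⊓ g₂ x) ∂(μH[1] : Measure X))
              + M₁ * (ENNReal.ofReal L * volume (Set.Ioo s t ∩ (V \ A)))
              + M₂ * (ENNReal.ofReal L * volume (Set.Ioo s t ∩ (A \ V))))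
            + eLipConst f * γ.gapIn s t :=
              add_le_add (add_le_add_left le_self_add _) le_rfl
        _ = _ := rfl

end ClaimSec

section MinTwo

set_option linter.unusedSectionVars false
set_option maxHeartbeats 1000000

variable {X : Type*} [MetricSpace X] [MeasurableSpace X] [BorelSpace X]

open CurveFragment

lemma min_two (γ : CurveFragment X) (f : X → ℝ) (hf : ∃ K : ℝ≥0, LipschitzWith K f)
    {g₁ g₂ : X → ℝ≥0∞} (hg₁ : Measurable g₁) (hg₂ : Measurable g₂)
    {M₁ M₂ : ℝ≥0∞} (hM₁ : M₁ ≠ ⊤) (hM₂ : M₂ ≠ ⊤)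
    (hnull₁ : μH[1] (γ.im ∩ {x | M₁ < g₁ x}) = 0)
    (hnull₂ : μH[1] (γ.im ∩ {x | M₂ < g₂ x}) = 0)
    (hsub₁ : ∀ C (hC : IsCompact C) (hne : C.Nonempty) (hd : C ⊆ γ.dom),
      StarUGIneqOn f g₁ (γ.restrict C hC hne hd))
    (hsub₂ : ∀ C (hC : IsCompact C) (hne : C.Nonempty) (hd : C ⊆ γ.dom),
      StarUGIneqOn f g₂ (γ.restrict C hC hne hd)) :
    StarUGIneqOn f (fun x => g₁ x ⊓ g₂ x) γ := by
  classical
  obtain ⟨L, hL0, hbi⟩ := γ.biLip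
  have hbiU : ∀ s ∈ γ.dom, ∀ t ∈ γ.dom, dist (γ.toFun s) (γ.toFun t) ≤ L * |s - t| :=
    fun a ha b hb => (hbi a ha b hb).2
  have hE : MeasurableSet {x | g₂ x < g₁ x} := measurableSet_lt hg₂ hg₁
  have main : ∀ s ∈ γ.dom, ∀ t ∈ γ.dom, s ≤ t →
      ENNReal.ofReal |f (γ.toFun s) - f (γ.toFun t)| ≤
        (∫⁻ x in γ.im, (g₁ x ⊓ g₂ x) ∂(μH[1] : Measure X)) + eLipConst f * γ.gapLength := by
    intro s hs t ht hst
    set E := {x | g₂ x < g₁ x} with hEdef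
    set A := γ.dom \ γ.toFun ⁻¹' E with hAdef
    have hAmeas : MeasurableSet A := by
      rw [hAdef, diff_eq, ← Set.preimage_compl]
      exact γ.measurable_dom_inter_preimage hE.compl
    have hAfin : volume A ≠ ⊤ := by
      refine ((measure_mono (hAdef ▸ diff_subset)).trans_lt γ.compact.measure_lt_top).ne
    set D := (M₁ + M₂) * ENNReal.ofReal L with hD
    have hDtop : D ≠ ⊤ :=
      ENNReal.mul_ne_top (ENNReal.add_ne_top.2 ⟨hM₁, hM₂⟩) ENNReal.ofReal_ne_top
    have key : ∀ δ : ℝ≥0∞, δ ≠ 0 →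
        ENNReal.ofReal |f (γ.toFun s) - f (γ.toFun t)| ≤
          ((∫⁻ x in γ.im, (g₁ x ⊓ g₂ x) ∂(μH[1] : Measure X)) + eLipConst f * γ.gapLength)
            + D * δ := by
      intro δ hδ
      obtain ⟨C, hCA, hCc, hCδ⟩ := hAmeas.exists_isCompact_diff_lt hAfin hδ
      obtain ⟨U, hAU, hUo, hUfin, hUδ⟩ := hAmeas.exists_isOpen_diff_lt hAfin hδ
      have hrx : ∀ x ∈ C, ∃ r > 0, Set.Ioo (x - r) (x + r) ⊆ U := by
        intro x hxC
        obtain ⟨r, hr0, hrU⟩ := Metric.isOpen_iff.1 hUo x (hAU (hCA hxC))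
        exact ⟨r, hr0, by rw [← Real.ball_eq_Ioo]; exact hrU⟩
      choose! r hr0 hrU using hrx
      have hnb : ∀ x ∈ C, Set.Ioo (x - r x) (x + r x) ∈ 𝓝 x := fun x hx =>
        Ioo_mem_nhds (by linarith [hr0 x hx]) (by linarith [hr0 x hx])
      obtain ⟨Fs, hFsC, hcover⟩ := hCc.elim_nhds_subcover (fun x => Set.Ioo (x - r x) (x + r x)) hnb
      set F : Finset (ℝ × ℝ) := Fs.image (fun x => (x - r x, x + r x)) with hFdef
      set V := ⋃ p ∈ F, Set.Ioo p.1 p.2 with hVdef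
      have hVU : V ⊆ U := by
        refine Set.iUnion₂_subset fun p hp => ?_
        obtain ⟨x, hxFs, rfl⟩ := Finset.mem_image.1 hp
        exact hrU x (hFsC x hxFs)
      have hCV : C ⊆ V := by
        intro y hy
        obtain ⟨x, hxFs, hyx⟩ := Set.mem_iUnion₂.1 (hcover hy)
        exact Set.mem_iUnion₂.2 ⟨(x - r x, x + r x), Finset.mem_image_of_mem _ hxFs, hyx⟩
      set Q : Finset ℝ := F.biUnion (fun p => {p.1, p.2}) with hQdef
      have hFQ : ∀ p ∈ F, (p.1 ∈ Set.Ioo s t → p.1 ∈ Q) ∧ (p.2 ∈ Set.Ioo s t → p.2 ∈ Q) := by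
        intro p hp
        constructor <;> intro _ <;> exact Finset.mem_biUnion.2 ⟨p, hp, by simp⟩
      have hcl := claim_main γ f hf hL0 hbiU g₁ g₂ M₁ M₂ hnull₁ hnull₂ hE hsub₁ hsub₂ F Q
        s hs t ht hst hFQ
      have hIle : (∫⁻ x in γ.toFun '' (γ.dom ∩ Icc s t), (g₁ x ⊓ g₂ x) ∂(μH[1] : Measure X))
          ≤ ∫⁻ x in γ.im, (g₁ x ⊓ g₂ x) ∂(μH[1] : Measure X) :=
        lintegral_mono_set (Set.image_mono inter_subset_left)
      have hv : volume (Set.Ioo s t ∩ (V \ A)) ≤ δ := by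
        refine le_trans (measure_mono ?_) hUδ.le
        rintro x ⟨-, hxV, hxA⟩
        exact ⟨hVU hxV, hxA⟩
      have hw : volume (Set.Ioo s t ∩ (A \ V)) ≤ δ := by
        refine le_trans (measure_mono ?_) hCδ.le
        rintro x ⟨-, hxA, hxV⟩
        exact ⟨hxA, fun hxC => hxV (hCV hxC)⟩
      have hgl : γ.gapIn s t ≤ γ.gapLength := γ.gapIn_le_gapLength s t
      calc ENNReal.ofReal |f (γ.toFun s) - f (γ.toFun t)|
          ≤ (∫⁻ x in γ.toFun '' (γ.dom ∩ Icc s t), (g₁ x ⊓ g₂ x) ∂(μH[1] : Measure X))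
            + M₁ * (ENNReal.ofReal L * volume (Set.Ioo s t ∩ (V \ A)))
            + M₂ * (ENNReal.ofReal L * volume (Set.Ioo s t ∩ (A \ V)))
            + eLipConst f * γ.gapIn s t := hcl
        _ ≤ (∫⁻ x in γ.im, (g₁ x ⊓ g₂ x) ∂(μH[1] : Measure X))
            + M₁ * (ENNReal.ofReal L * δ) + M₂ * (ENNReal.ofReal L * δ)
            + eLipConst f * γ.gapLength := by
              gcongr <;> first | exact hIle | exact hv | exact hw | exact hgl
        _ = ((∫⁻ x in γ.im, (g₁ x ⊓ g₂ x) ∂(μH[1] : Measure X))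
              + eLipConst f * γ.gapLength) + D * δ := by
              rw [hD]; ring
    rcases eq_or_ne D 0 with hD0 | hD0
    · have := key 1 one_ne_zero
      rwa [hD0, zero_mul, add_zero] at this
    refine ENNReal.le_of_forall_pos_le_add fun ε hε hfin => ?_
    have hδ : (ε : ℝ≥0∞) / D ≠ 0 := by
      simp only [ne_eq, ENNReal.div_eq_zero_iff, not_or]
      exact ⟨by exact_mod_cast hε.ne', hDtop⟩
    refine (key _ hδ).trans ?_
    rw [ENNReal.mul_div_cancel hD0 hDtop]
  intro s hs t ht
  rcases le_total s t with h | h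
  · exact main s hs t ht h
  · rw [abs_sub_comm]
    exact main t ht s hs h

end MinTwo

section FinalAux

set_option linter.unusedSectionVars false
set_option maxHeartbeats 1000000

variable {X : Type*} [MetricSpace X] [MeasurableSpace X] [BorelSpace X]

open CurveFragment

lemma StarUGIneqOn.congr' {f : X → ℝ} {g g' : X → ℝ≥0∞} (h : ∀ x, g x = g' x)
    {γ : CurveFragment X} (hg : StarUGIneqOn f g γ) : StarUGIneqOn f g' γ := by
  intro a ha b hb
  refine (hg a ha b hb).trans (le_of_eq ?_)
  congr 1
  exact lintegral_congr fun x => h x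

lemma modInfty_zero_of (μ : Measure X) (Γ : Set (CurveFragment X))
    (h : ∀ ε : ℝ≥0∞, ε ≠ 0 → ∃ ρ : X → ℝ≥0∞, Measurable ρ ∧
      (∀ γ ∈ Γ, 1 ≤ ∫⁻ x in γ.im, ρ x ∂(μH[1] : Measure X)) ∧ essSup ρ μ ≤ ε) :
    ModInfty μ Γ = 0 := by
  refine le_antisymm ?_ (zero_le)
  refine ENNReal.le_of_forall_pos_le_add fun ε hε _ => ?_
  obtain ⟨ρ, hm, hadm, hess⟩ := h ε (by exact_mod_cast hε.ne')
  rw [zero_add]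
  exact le_trans (iInf_le_of_le ρ (iInf_le_of_le hm (iInf_le_of_le hadm le_rfl))) hess

lemma modInfty_extract (μ : Measure X) (Γ : Set (CurveFragment X)) (h : ModInfty μ Γ = 0)
    {ε : ℝ≥0∞} (hε : ε ≠ 0) : ∃ ρ : X → ℝ≥0∞, Measurable ρ ∧
      (∀ γ ∈ Γ, 1 ≤ ∫⁻ x in γ.im, ρ x ∂(μH[1] : Measure X)) ∧ essSup ρ μ < ε := by
  have h2 : ModInfty μ Γ < ε := h ▸ pos_iff_ne_zero.2 hε
  rw [ModInfty, iInf_lt_iff] at h2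
  obtain ⟨ρ, h2⟩ := h2
  rw [iInf_lt_iff] at h2
  obtain ⟨hm, h2⟩ := h2
  rw [iInf_lt_iff] at h2
  obtain ⟨hadm, h2⟩ := h2
  exact ⟨ρ, hm, hadm, h2⟩

lemma finmin (γ : CurveFragment X) (f : X → ℝ) (hf : ∃ K : ℝ≥0, LipschitzWith K f)
    (ρ : ℕ → X → ℝ≥0∞) (hmeas : ∀ i, Measurable (ρ i))
    (M : ℕ → ℝ≥0∞) (hM : ∀ i, M i ≠ ⊤)
    (hnull : ∀ i, μH[1] (γ.im ∩ {x | M i < ρ i x}) = 0)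
    (hGood : ∀ i, ∀ C (hC : IsCompact C) (hne : C.Nonempty) (hd : C ⊆ γ.dom),
      StarUGIneqOn f (ρ i) (γ.restrict C hC hne hd)) :
    ∀ n, ∀ C (hC : IsCompact C) (hne : C.Nonempty) (hd : C ⊆ γ.dom),
      StarUGIneqOn f (fun x => ⨅ i ∈ Finset.range (n+1), ρ i x) (γ.restrict C hC hne hd) := by
  intro n
  induction n with
  | zero =>
    intro C hC hne hd
    refine StarUGIneqOn.congr' (fun x => ?_) (hGood 0 C hC hne hd)
    simp
  | succ n ihn =>
    intro C hC hne hd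
    have h2 : StarUGIneqOn f (fun x => (⨅ i ∈ Finset.range (n+1), ρ i x) ⊓ ρ (n+1) x)
        (γ.restrict C hC hne hd) := by
      refine min_two (γ.restrict C hC hne hd) f hf
        (Measurable.iInf fun i => Measurable.iInf fun _ => hmeas i) (hmeas (n+1))
        (M₁ := M 0) (M₂ := M (n+1)) (hM 0) (hM (n+1)) ?_ ?_ ?_ ?_
      · refine measure_mono_null ?_ (hnull 0)
        rintro x ⟨hx1, hx2⟩
        simp only [Set.mem_setOf_eq] at hx2
        refine ⟨Set.image_mono hd hx1, ?_⟩
        show M 0 < ρ 0 x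
        exact lt_of_lt_of_le hx2 (iInf₂_le 0 (Finset.mem_range.2 (Nat.succ_pos n)))
      · exact measure_mono_null
          (inter_subset_inter (Set.image_mono hd) subset_rfl) (hnull (n+1))
      · intro C' hC' hne' hd'
        exact ihn C' hC' hne' (hd'.trans hd)
      · intro C' hC' hne' hd'
        exact hGood (n+1) C' hC' hne' (hd'.trans hd)
    refine StarUGIneqOn.congr' (fun x => ?_) h2
    refine le_antisymm ?_ ?_
    · refine le_iInf₂ fun i hi => ?_
      have hi' : i ≤ n + 1 := by
        have := Finset.mem_range.1 hi; omega
      rcases eq_or_lt_of_le hi' with rfl | hilt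
      · exact inf_le_right
      · exact le_trans inf_le_left (iInf₂_le i (Finset.mem_range.2 (by omega)))
    · refine le_inf (le_iInf₂ fun i hi => iInf₂_le i (Finset.mem_range.2 ?_))
        (iInf₂_le (n+1) (Finset.mem_range.2 (by omega)))
      have := Finset.mem_range.1 hi; omega

end FinalAux

/-- The countable lattice property: the pointwise infimum of countably many
weak `∗`-upper gradients in `L^∞(μ)` of a Lipschitz function is again a weak `∗`-upper
gradient. -/
theorem iInf_isWeakStarUG
    [CompleteSpace X] [TopologicalSpace.SeparableSpace X]
    (μ : Measure X) (hμ : ∀ s : Set X, Bornology.IsBounded s → μ s < ⊤)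
    (f : X → ℝ) (hf : ∃ K : ℝ≥0, LipschitzWith K f)
    (ρ : ℕ → X → ℝ≥0∞) (hmeas : ∀ i, Measurable (ρ i))
    (hbdd : ∀ i, essSup (ρ i) μ < ⊤)
    (hUG : ∀ i, IsWeakStarUG μ f (ρ i)) :
    IsWeakStarUG μ f (fun x => ⨅ i, ρ i x) := by
  classical
  choose Γs hΓs hΓsUG using hUG
  set M : ℕ → ℝ≥0∞ := fun i => essSup (ρ i) μ with hMdef
  have hMtop : ∀ i, M i ≠ ⊤ := fun i => (hbdd i).ne
  set N : Set X := ⋃ i, {x | M i < ρ i x} with hNdef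
  have hNmeas : MeasurableSet N :=
    MeasurableSet.iUnion fun i => measurableSet_lt measurable_const (hmeas i)
  have hNnull : μ N = 0 := by
    rw [hNdef, measure_iUnion_null_iff]
    intro i
    have hae := ENNReal.ae_le_essSup (μ := μ) (ρ i)
    rw [ae_iff] at hae
    refine measure_mono_null (fun x hx => ?_) hae
    simp only [Set.mem_setOf_eq, not_le] at hx ⊢
    exact hx
  set Bad : Set (CurveFragment X) :=
    (⋃ i, Γs i) ∪ {γ : CurveFragment X | μH[1] (γ.im ∩ N) ≠ 0} with hBad
  set Γ₀ : Set (CurveFragment X) :=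
    {γ : CurveFragment X | ∃ δ : CurveFragment X, δ.im ⊆ γ.im ∧ δ ∈ Bad} with hΓ₀
  refine ⟨Γ₀, ?_, ?_⟩
  · -- the exceptional family has zero modulus
    refine modInfty_zero_of μ Γ₀ fun ε hε => ?_
    have hhalf : ∀ i, ∃ ρ' : X → ℝ≥0∞, Measurable ρ' ∧
        (∀ γ ∈ Γs i, 1 ≤ ∫⁻ x in γ.im, ρ' x ∂(μH[1] : Measure X)) ∧ essSup ρ' μ < ε :=
      fun i => modInfty_extract μ (Γs i) (hΓs i) hε
    choose ρ' hρ'm hρ'adm hρ'ess using hhalf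
    refine ⟨fun x => (⨆ i, ρ' i x) ⊔ (N.indicator (fun _ => (⊤ : ℝ≥0∞)) x), ?_, ?_, ?_⟩
    · exact Measurable.sup (Measurable.iSup fun i => hρ'm i)
        (measurable_const.indicator hNmeas)
    · rintro γ ⟨δ, hδim, hδBad⟩
      rcases hδBad with hin | hch
      · obtain ⟨i, hi⟩ := Set.mem_iUnion.1 hin
        refine le_trans (hρ'adm i δ hi) ?_
        refine le_trans (lintegral_mono fun x => ?_) (lintegral_mono_set hδim)
        exact le_sup_of_le_left (le_iSup (fun j => ρ' j x) i)
      · have hch2 : μH[1] (δ.im ∩ N) ≠ 0 := hch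
        have hch' : μH[1] (N ∩ δ.im) ≠ 0 := by
          rw [Set.inter_comm]; exact hch2
        calc (1 : ℝ≥0∞) ≤ ⊤ * μH[1] (N ∩ δ.im) := by
              rw [ENNReal.top_mul hch']; exact le_top
          _ = ∫⁻ x in δ.im, N.indicator (fun _ => (⊤ : ℝ≥0∞)) x ∂(μH[1] : Measure X) := by
              rw [lintegral_indicator hNmeas, setLIntegral_const, Measure.restrict_apply hNmeas]
          _ ≤ ∫⁻ x in δ.im, ((⨆ i, ρ' i x) ⊔ N.indicator (fun _ => (⊤ : ℝ≥0∞)) x)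
                ∂(μH[1] : Measure X) := lintegral_mono fun x => le_sup_right
          _ ≤ _ := lintegral_mono_set hδim
    · have h1 : ∀ᵐ x ∂μ, ∀ i, ρ' i x ≤ essSup (ρ' i) μ :=
        ae_all_iff.2 fun i => ENNReal.ae_le_essSup (ρ' i)
      have h2 : ∀ᵐ x ∂μ, x ∉ N := by
        rw [ae_iff]
        have hcc : {x | ¬ x ∉ N} = N := by ext x; simp
        rwa [hcc]
      refine essSup_le_of_ae_le _ ?_
      filter_upwards [h1, h2] with x hx1 hx2
      refine sup_le (iSup_le fun i => (hx1 i).trans (hρ'ess i).le) ?_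
      rw [Set.indicator_of_notMem hx2]
      exact zero_le
  · -- the inequality holds off the exceptional family
    intro γ hγ
    have hGood : ∀ i, ∀ C (hC : IsCompact C) (hne : C.Nonempty) (hd : C ⊆ γ.dom),
        StarUGIneqOn f (ρ i) (γ.restrict C hC hne hd) := by
      intro i C hC hne hd
      by_cases hmem : (γ.restrict C hC hne hd) ∈ Γs i
      · exact absurd (⟨γ.restrict C hC hne hd, Set.image_mono hd,
          Or.inl (Set.mem_iUnion.2 ⟨i, hmem⟩)⟩ : γ ∈ Γ₀) hγ
      · exact hΓsUG i _ hmem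
    have hNγ : μH[1] (γ.im ∩ N) = 0 := by
      by_contra hch
      exact hγ ⟨γ, subset_rfl, Or.inr hch⟩
    have hnulls : ∀ i, μH[1] (γ.im ∩ {x | M i < ρ i x}) = 0 := fun i =>
      measure_mono_null (Set.inter_subset_inter subset_rfl
        (Set.subset_iUnion (fun j => {x | M j < ρ j x}) i)) (by rw [← hNdef]; exact hNγ)
    have hfm := finmin γ f hf ρ hmeas M hMtop hnulls hGood
    intro s hs t ht
    have hn : ∀ n : ℕ, ENNReal.ofReal |f (γ.toFun s) - f (γ.toFun t)| ≤
        (∫⁻ x in γ.im, (⨅ i ∈ Finset.range (n+1), ρ i x) ∂(μH[1] : Measure X))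
          + eLipConst f * γ.gapLength :=
      fun n => hfm n γ.dom γ.compact γ.nonempty subset_rfl s hs t ht
    obtain ⟨L, hL0, hbi⟩ := γ.biLip
    have hbiU : ∀ a ∈ γ.dom, ∀ b ∈ γ.dom, dist (γ.toFun a) (γ.toFun b) ≤ L * |a - b| :=
      fun a ha b hb => (hbi a ha b hb).2
    have hH1fin : μH[1] γ.im ≠ ⊤ := by
      refine ((γ.image_H1_le hL0 hbiU subset_rfl).trans_lt ?_).ne
      exact ENNReal.mul_lt_top ENNReal.ofReal_lt_top γ.compact.measure_lt_top
    have hminmeas : ∀ n : ℕ, Measurable (fun x => ⨅ i ∈ Finset.range (n+1), ρ i x) :=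
      fun n => Measurable.iInf fun i => Measurable.iInf fun _ => hmeas i
    have hanti : Antitone (fun n => fun x => ⨅ i ∈ Finset.range (n+1), ρ i x) := by
      intro a b hab
      intro x
      refine le_iInf₂ fun i hi => iInf₂_le i (Finset.mem_range.2 ?_)
      have := Finset.mem_range.1 hi; omega
    have himC : IsCompact γ.im := γ.compact.image_of_continuousOn γ.continuousOn
    have hfin0 : (∫⁻ x in γ.im, (⨅ i ∈ Finset.range (0+1), ρ i x)
        ∂(μH[1] : Measure X)) ≠ ⊤ := by
      have hae : ∀ᵐ x ∂((μH[1] : Measure X).restrict γ.im),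
          (⨅ i ∈ Finset.range 1, ρ i x) ≤ M 0 := by
        rw [ae_restrict_iff' himC.measurableSet, ae_iff]
        refine measure_mono_null (fun x hx => ?_) (hnulls 0)
        simp only [Set.mem_setOf_eq, Classical.not_imp, not_le] at hx
        exact ⟨hx.1, hx.2.trans_le (iInf₂_le 0 (Finset.mem_range.2 Nat.one_pos))⟩
      have hle : (∫⁻ x in γ.im, (⨅ i ∈ Finset.range 1, ρ i x) ∂(μH[1] : Measure X))
          ≤ M 0 * μH[1] γ.im := by
        calc (∫⁻ x in γ.im, (⨅ i ∈ Finset.range 1, ρ i x) ∂(μH[1] : Measure X))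
            ≤ ∫⁻ _ in γ.im, M 0 ∂(μH[1] : Measure X) := lintegral_mono_ae hae
          _ = M 0 * μH[1] γ.im := setLIntegral_const _ _
      exact (hle.trans_lt (ENNReal.mul_lt_top (hMtop 0).lt_top hH1fin.lt_top)).ne
    have hlim := lintegral_iInf (μ := (μH[1] : Measure X).restrict γ.im) hminmeas hanti hfin0
    have hpt : ∀ x : X, (⨅ n : ℕ, ⨅ i ∈ Finset.range (n+1), ρ i x) = ⨅ i, ρ i x := by
      intro x
      refine le_antisymm ?_ ?_
      · refine le_iInf fun i => ?_
        exact le_trans (iInf_le _ i) (iInf₂_le i (Finset.self_mem_range_succ i))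
      · exact le_iInf fun n => le_iInf₂ fun i _ => iInf_le (fun j => ρ j x) i
    calc ENNReal.ofReal |f (γ.toFun s) - f (γ.toFun t)|
        ≤ ⨅ n : ℕ, ((∫⁻ x in γ.im, (⨅ i ∈ Finset.range (n+1), ρ i x) ∂(μH[1] : Measure X))
            + eLipConst f * γ.gapLength) := le_iInf hn
      _ = (⨅ n : ℕ, ∫⁻ x in γ.im, (⨅ i ∈ Finset.range (n+1), ρ i x) ∂(μH[1] : Measure X))
            + eLipConst f * γ.gapLength := by rw [← ENNReal.iInf_add]
      _ = (∫⁻ x in γ.im, (⨅ n : ℕ, ⨅ i ∈ Finset.range (n+1), ρ i x) ∂(μH[1] : Measure X))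
            + eLipConst f * γ.gapLength := by rw [hlim]
      _ = (∫⁻ x in γ.im, (⨅ i, ρ i x) ∂(μH[1] : Measure X))
            + eLipConst f * γ.gapLength := by
            rw [lintegral_congr fun x => hpt x]
      _ = _ := rfl
end

section
/- If $\rho\in L^\infty(\mu)$ is a weak $\ast$-upper gradient of a Lipschitz function $f:X\to\mathbb{R}$, then there is a Borel $\mu$-null set $N\subset X$ such that $\tilde\rho=\operatorname{LIP}(f)\chi_N+\rho\chi_{X\setminus N}$ is a genuine $\ast$-upper gradient of $f$; in particular every weak $\ast$-upper gradient has a $\mu$-a.e. representative that is a genuine $\ast$-upper gradient. -/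
open MeasureTheory Filter Topology Set
open scoped ENNReal NNReal

variable {X : Type*} [MetricSpace X] [MeasurableSpace X] [BorelSpace X]

/-- The set of gap pairs of a set `E ⊆ ℝ`. -/
def gapSet (E : Set ℝ) : Set (ℝ × ℝ) :=
  {p | p.1 ∈ E ∧ p.2 ∈ E ∧ p.1 < p.2 ∧ Set.Ioo p.1 p.2 ∩ E = ∅}

/-- The gap pairs of `E` contained in `[a,b]`. -/
def gapIn (E : Set ℝ) (a b : ℝ) : Set (ℝ × ℝ) :=
  {p | p ∈ gapSet E ∧ Set.Icc p.1 p.2 ⊆ Set.Icc a b}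

lemma gapSet_eq_of_inter {E : Set ℝ} {p q : ℝ × ℝ} (hp : p ∈ gapSet E) (hq : q ∈ gapSet E)
    (h : (Set.Ioo p.1 p.2 ∩ Set.Ioo q.1 q.2).Nonempty) : p = q := by
  obtain ⟨x, hxp, hxq⟩ := h
  obtain ⟨hp1, hp2, hp12, hpE⟩ := hp
  obtain ⟨hq1, hq2, hq12, hqE⟩ := hq
  have key₁ : ∀ {u v w : ℝ}, w ∈ E → Set.Ioo u v ∩ E = ∅ → w < v → w ≤ u := by
    intro u v w hwE hE hwv
    by_contra hc
    push_neg at hc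
    have : w ∈ Set.Ioo u v ∩ E := ⟨⟨hc, hwv⟩, hwE⟩
    simp [hE] at this
  have key₂ : ∀ {u v w : ℝ}, w ∈ E → Set.Ioo u v ∩ E = ∅ → u < w → v ≤ w := by
    intro u v w hwE hE hwv
    by_contra hc
    push_neg at hc
    have : w ∈ Set.Ioo u v ∩ E := ⟨⟨hwv, hc⟩, hwE⟩
    simp [hE] at this
  have h1 : q.1 ≤ p.1 := key₁ hq1 hpE (lt_trans hxq.1 hxp.2)
  have h2 : p.1 ≤ q.1 := key₁ hp1 hqE (lt_trans hxp.1 hxq.2)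
  have h3 : q.2 ≤ p.2 := key₂ hp2 hqE (lt_trans hxq.1 hxp.2)
  have h4 : p.2 ≤ q.2 := key₂ hq2 hpE (lt_trans hxp.1 hxq.2)
  exact Prod.ext (le_antisymm h2 h1) (le_antisymm h4 h3)

lemma gapSet_countable (E : Set ℝ) : (gapSet E).Countable := by
  have hex : ∀ p : gapSet E, ∃ r : ℚ, (r : ℝ) ∈ Set.Ioo (p : ℝ × ℝ).1 (p : ℝ × ℝ).2 :=
    fun p => exists_rat_btwn p.2.2.2.1
  choose F hF using hex
  have hinj : Function.Injective F := by
    intro p q h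
    refine Subtype.ext (gapSet_eq_of_inter p.2 q.2 ⟨(F p : ℝ), hF p, ?_⟩)
    rw [h]; exact hF q
  exact Set.countable_coe_iff.mp hinj.countable

section Meas

variable {X : Type*} [MetricSpace X] [MeasurableSpace X] [BorelSpace X]

lemma pair_null (x y : X) : (μH[1] : Measure X) ({x, y} : Set X) = 0 := by
  haveI := MeasureTheory.Measure.noAtoms_hausdorff X (one_pos)
  refine le_antisymm ?_ (zero_le)
  calc (μH[1] : Measure X) ({x, y} : Set X) ≤ μH[1] ({x} : Set X) + μH[1] ({y} : Set X) :=
        measure_union_le _ _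
  _ = 0 := by simp

lemma restrict_measurableEmbedding {γ : ℝ → X} {E : Set ℝ} (hE : IsCompact E)
    (hcont : ContinuousOn γ E) (hinj : Set.InjOn γ E) :
    MeasurableEmbedding (E.restrict γ) := by
  haveI : CompactSpace E := isCompact_iff_compactSpace.mp hE
  have hg : Continuous (E.restrict γ) := hcont.restrict
  have hginj : Function.Injective (E.restrict γ) :=
    fun u v h => Subtype.ext (hinj u.2 v.2 h)
  exact (hg.isClosedEmbedding hginj).measurableEmbedding

lemma image_inter_measurable {γ : ℝ → X} {E : Set ℝ} (hE : IsCompact E)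
    (hcont : ContinuousOn γ E) (hinj : Set.InjOn γ E) {S : Set ℝ} (hS : MeasurableSet S) :
    MeasurableSet (γ '' (E ∩ S)) := by
  have hemb := restrict_measurableEmbedding hE hcont hinj
  have himg : γ '' (E ∩ S) = E.restrict γ '' (Subtype.val ⁻¹' S) := by
    ext x
    constructor
    · rintro ⟨u, ⟨huE, huS⟩, rfl⟩
      exact ⟨⟨u, huE⟩, huS, rfl⟩
    · rintro ⟨⟨u, huE⟩, huS, rfl⟩
      exact ⟨u, ⟨huE, huS⟩, rfl⟩
  rw [himg]
  exact hemb.measurableSet_image' (measurable_subtype_coe hS)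

lemma mem_E_and_mem_measurable {γ : ℝ → X} {E : Set ℝ} (hE : IsCompact E)
    (hcont : ContinuousOn γ E) {N : Set X} (hN : MeasurableSet N) :
    MeasurableSet {u ∈ E | γ u ∈ N} := by
  have hEm : MeasurableSet E := hE.isClosed.measurableSet
  have himg : {u ∈ E | γ u ∈ N} = Subtype.val '' (E.restrict γ ⁻¹' N) := by
    ext u
    constructor
    · rintro ⟨hu, hgu⟩
      exact ⟨⟨u, hu⟩, hgu, rfl⟩
    · rintro ⟨⟨v, hv⟩, hgv, rfl⟩
      exact ⟨hv, hgv⟩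
  rw [himg]
  exact (MeasurableEmbedding.subtype_coe hEm).measurableSet_image' (hcont.restrict.measurable hN)

end Meas


section AuxG
variable {X : Type*} [MetricSpace X] [MeasurableSpace X] [BorelSpace X]

/-- Key geometric lemma: along a continuous map on a compact set `E`, the distance between
the images of two points is bounded by the `H¹` measure of the image of `E ∩ [a,b]` plus the
sum of the jumps across the gaps of `E` inside `[a,b]`. -/
lemma dist_le_hausdorff_add_gaps {γ : ℝ → X} {E : Set ℝ} (hE : IsCompact E)
    (hcont : ContinuousOn γ E) {a b : ℝ} (ha : a ∈ E) (hb : b ∈ E) (hab : a ≤ b) :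
    edist (γ a) (γ b) ≤ μH[1] (γ '' (E ∩ Set.Icc a b)) +
      ∑' p : gapIn E a b, edist (γ (p : ℝ × ℝ).1) (γ (p : ℝ × ℝ).2) := by
  set E' := E ∩ Set.Icc a b with hE'def
  have hE'E : E' ⊆ E := Set.inter_subset_left
  have hE'c : IsCompact E' := hE.inter_right isClosed_Icc
  set h : ℝ → ℝ := fun u => dist (γ u) (γ a) with hdef
  have hhc : ContinuousOn h E' :=
    (continuous_id.dist continuous_const).comp_continuousOn (hcont.mono hE'E)
  set D := dist (γ a) (γ b) with hD
  set I : ℝ × ℝ → Set ℝ := fun p => Set.Ioo (min (h p.1) (h p.2)) (max (h p.1) (h p.2)) with hI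
  have haE' : a ∈ E' := ⟨ha, le_refl a, hab⟩
  have hbE' : b ∈ E' := ⟨hb, hab, le_refl b⟩
  have hha : h a = 0 := by simp [hdef]
  have hhb : h b = D := by simp [hdef, hD, dist_comm]
  -- the covering claim
  have cover : Set.Icc 0 D ⊆ (h '' E') ∪ ⋃ p ∈ gapIn E a b, I p := by
    rintro r ⟨hr0, hrD⟩
    by_cases hrS : r ∈ h '' E'
    · exact Or.inl hrS
    right
    have hr0' : 0 < r := by
      rcases eq_or_lt_of_le hr0 with he | hlt
      · exact absurd ⟨a, haE', by rw [hha, ← he]⟩ hrS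
      · exact hlt
    have hrD' : r < D := by
      rcases eq_or_lt_of_le hrD with he | hlt
      · exact absurd ⟨b, hbE', by rw [hhb, he]⟩ hrS
      · exact hlt
    have hne : ∀ u ∈ E', h u ≠ r := fun u hu he => hrS ⟨u, hu, he⟩
    -- Q : points after the level r
    set Q := E' ∩ h ⁻¹' Set.Ici r with hQdef
    have hQc : IsCompact Q := by
      have hcl : IsClosed Q := hhc.preimage_isClosed_of_isClosed hE'c.isClosed isClosed_Ici
      exact hE'c.of_isClosed_subset hcl Set.inter_subset_left
    have hQne : Q.Nonempty := ⟨b, hbE', by simp [hhb]; exact hrD'.le⟩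
    obtain ⟨q₀, hq₀Q, hq₀min⟩ := hQc.exists_isLeast hQne
    have hq₀E' : q₀ ∈ E' := hq₀Q.1
    have hq₀r : r < h q₀ := lt_of_le_of_ne hq₀Q.2 (Ne.symm (hne _ hq₀E'))
    -- P' : points before the level r, below q₀
    set P := E' ∩ h ⁻¹' Set.Iic r ∩ Set.Iic q₀ with hPdef
    have hPc : IsCompact P := by
      have hcl : IsClosed (E' ∩ h ⁻¹' Set.Iic r) :=
        hhc.preimage_isClosed_of_isClosed hE'c.isClosed isClosed_Iic
      exact hE'c.of_isClosed_subset (hcl.inter isClosed_Iic)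
        (Set.inter_subset_left.trans Set.inter_subset_left)
    have haq₀ : a ≤ q₀ := hq₀E'.2.1
    have hPne : P.Nonempty := ⟨a, ⟨haE', by simp [hha, hr0'.le]⟩, haq₀⟩
    obtain ⟨p₀, hp₀P, hp₀max⟩ := hPc.exists_isGreatest hPne
    have hp₀E' : p₀ ∈ E' := hp₀P.1.1
    have hp₀r : h p₀ < r := lt_of_le_of_ne hp₀P.1.2 (hne _ hp₀E')
    have hp₀q₀ : p₀ < q₀ :=
      lt_of_le_of_ne hp₀P.2 (fun he => absurd hq₀r (not_lt.2 (he ▸ hp₀r).le))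
    -- gap property
    have hgap : Set.Ioo p₀ q₀ ∩ E = ∅ := by
      rw [Set.eq_empty_iff_forall_notMem]
      rintro u ⟨⟨hpu, huq⟩, huE⟩
      have huE' : u ∈ E' := ⟨huE, hp₀E'.2.1.trans hpu.le, huq.le.trans hq₀E'.2.2⟩
      rcases lt_or_gt_of_ne (hne u huE') with h1 | h1
      · exact absurd (hp₀max ⟨⟨huE', h1.le⟩, huq.le⟩) (not_le.2 hpu)
      · exact absurd (hq₀min ⟨huE', h1.le⟩) (not_le.2 huq)
    have hmem : (p₀, q₀) ∈ gapIn E a b := by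
      refine ⟨⟨hp₀E'.1, hq₀E'.1, hp₀q₀, hgap⟩, ?_⟩
      exact Set.Icc_subset_Icc hp₀E'.2.1 hq₀E'.2.2
    refine Set.mem_biUnion hmem ?_
    constructor
    · exact lt_of_le_of_lt (min_le_left _ _) hp₀r
    · exact lt_of_lt_of_le hq₀r (le_max_right _ _)
  -- measure estimates
  have hDnn : (0 : ℝ) ≤ D := dist_nonneg
  have step1 : edist (γ a) (γ b) = volume (Set.Icc 0 D) := by
    rw [Real.volume_Icc, edist_dist, sub_zero]
  have step2 : volume (h '' E') ≤ μH[1] (γ '' E') := by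
    have him : h '' E' = (fun x => dist x (γ a)) '' (γ '' E') := by
      rw [Set.image_image]
    rw [← MeasureTheory.hausdorffMeasure_real, him]
    have := (LipschitzWith.dist_left (γ a)).hausdorffMeasure_image_le
      (zero_le_one' ℝ) (γ '' E')
    simpa using this
  have step3 : ∀ p : ℝ × ℝ, p ∈ gapIn E a b → volume (I p) ≤ edist (γ p.1) (γ p.2) := by
    intro p _
    rw [hI]
    simp only
    rw [Real.volume_Ioo, max_sub_min_eq_abs, edist_dist]
    apply ENNReal.ofReal_le_ofReal
    exact le_trans (abs_dist_sub_le _ _ _) (le_of_eq (dist_comm _ _))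
  calc edist (γ a) (γ b) = volume (Set.Icc 0 D) := step1
  _ ≤ volume ((h '' E') ∪ ⋃ p ∈ gapIn E a b, I p) := measure_mono cover
  _ ≤ volume (h '' E') + volume (⋃ p ∈ gapIn E a b, I p) := measure_union_le _ _
  _ ≤ μH[1] (γ '' E') + ∑' p : gapIn E a b, volume (I p) :=
      add_le_add step2 (measure_biUnion_le volume ((gapSet_countable E).mono (fun p hp => hp.1)) I)
  _ ≤ μH[1] (γ '' E') + ∑' p : gapIn E a b, edist (γ (p : ℝ × ℝ).1) (γ (p : ℝ × ℝ).2) :=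
      add_le_add_right (ENNReal.tsum_le_tsum (fun p => step3 _ p.2)) _


/-- Comparison of the gap length of a restricted fragment with that of the original one. -/
lemma gapLength_restrict_le {γ : ℝ → X} {E K' : Set ℝ} (hE : IsCompact E)
    (hcont : ContinuousOn γ E) (hinj : Set.InjOn γ E) (hK'E : K' ⊆ E)
    {s t : ℝ} (hK'I : K' ⊆ Set.Icc s t) :
    ∑' p : gapSet K', edist (γ (p : ℝ × ℝ).1) (γ (p : ℝ × ℝ).2) ≤
      μH[1] (γ '' ((E ∩ Set.Icc s t) \ K')) +
        ∑' p : gapSet E, edist (γ (p : ℝ × ℝ).1) (γ (p : ℝ × ℝ).2) := by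
  classical
  set V : ℝ × ℝ → Set X := fun p => γ '' (E ∩ Set.Ioo p.1 p.2) with hV
  have hpt : ∀ p : ℝ × ℝ, p ∈ gapSet K' → edist (γ p.1) (γ p.2) ≤ μH[1] (V p) +
      ∑' q : gapIn E p.1 p.2, edist (γ (q : ℝ × ℝ).1) (γ (q : ℝ × ℝ).2) := by
    intro p hp
    obtain ⟨hp1, hp2, hp12, hpgap⟩ := hp
    refine (dist_le_hausdorff_add_gaps hE hcont (hK'E hp1) (hK'E hp2) hp12.le).trans
      (add_le_add_left ?_ _)
    have hsub : γ '' (E ∩ Set.Icc p.1 p.2) ⊆ V p ∪ {γ p.1, γ p.2} := by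
      rintro x ⟨u, ⟨huE, hu1, hu2⟩, rfl⟩
      rcases eq_or_lt_of_le hu1 with rfl | hu1'
      · exact Or.inr (Or.inl rfl)
      rcases eq_or_lt_of_le hu2 with heq | hu2'
      · exact Or.inr (Or.inr (by rw [heq]; rfl))
      
      exact Or.inl ⟨u, ⟨huE, hu1', hu2'⟩, rfl⟩
    calc μH[1] (γ '' (E ∩ Set.Icc p.1 p.2)) ≤ μH[1] (V p ∪ {γ p.1, γ p.2}) := measure_mono hsub
    _ ≤ μH[1] (V p) + μH[1] ({γ p.1, γ p.2} : Set X) := measure_union_le _ _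
    _ = μH[1] (V p) := by rw [pair_null, add_zero]
  have h2 : (∑' p : gapSet K', edist (γ (p : ℝ × ℝ).1) (γ (p : ℝ × ℝ).2)) ≤
      (∑' p : gapSet K', μH[1] (V p)) +
      ∑' p : gapSet K', ∑' q : gapIn E (p : ℝ × ℝ).1 (p : ℝ × ℝ).2,
        edist (γ (q : ℝ × ℝ).1) (γ (q : ℝ × ℝ).2) := by
    rw [← ENNReal.tsum_add]
    exact ENNReal.tsum_le_tsum fun p => hpt _ p.2
  refine h2.trans (add_le_add ?_ ?_)
  · have hmeasV : ∀ p ∈ gapSet K', MeasurableSet (V p) := fun p _ =>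
      image_inter_measurable hE hcont hinj measurableSet_Ioo
    have hdisj : (gapSet K').PairwiseDisjoint V := by
      intro p hp q hq hpq
      refine Set.disjoint_left.mpr ?_
      rintro x ⟨u, ⟨huE, huI⟩, rfl⟩ ⟨v, ⟨hvE, hvI⟩, hvx⟩
      have huv : u = v := hinj huE hvE hvx.symm
      exact hpq (gapSet_eq_of_inter hp hq ⟨u, huI, huv ▸ hvI⟩)
    rw [← measure_biUnion (gapSet_countable K') hdisj hmeasV]
    refine measure_mono (Set.iUnion₂_subset fun p hp => ?_)
    rintro x ⟨u, ⟨huE, hu1, hu2⟩, rfl⟩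
    refine ⟨u, ⟨⟨huE, (hK'I hp.1).1.trans hu1.le, hu2.le.trans (hK'I hp.2.1).2⟩, ?_⟩, rfl⟩
    intro huK'
    exact (Set.eq_empty_iff_forall_notMem.1 hp.2.2.2 u) ⟨⟨hu1, hu2⟩, huK'⟩
  · rw [← ENNReal.tsum_sigma]
    have key : ∀ (a b : ℝ) (q : ↥(gapIn E a b)) (x : ℝ),
        x ∈ Set.Ioo (q : ℝ × ℝ).1 (q : ℝ × ℝ).2 → x ∈ Set.Ioo a b := by
      intro a b q x hx
      have hq1 : (q : ℝ × ℝ).1 < (q : ℝ × ℝ).2 := q.2.1.2.2.1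
      have h1 := q.2.2 (Set.left_mem_Icc.mpr hq1.le)
      have h2 := q.2.2 (Set.right_mem_Icc.mpr hq1.le)
      exact ⟨lt_of_le_of_lt h1.1 hx.1, lt_of_lt_of_le hx.2 h2.2⟩
    set F : (Σ p : ↥(gapSet K'), ↥(gapIn E (p : ℝ × ℝ).1 (p : ℝ × ℝ).2)) → ↥(gapSet E) :=
      fun x => ⟨(x.2 : ℝ × ℝ), x.2.2.1⟩ with hF
    have hFinj : Function.Injective F := by
      rintro ⟨p, q⟩ ⟨p', q'⟩ h
      have hq : (q : ℝ × ℝ) = (q' : ℝ × ℝ) := congrArg Subtype.val h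
      obtain ⟨x, hx⟩ : (Set.Ioo (q : ℝ × ℝ).1 (q : ℝ × ℝ).2).Nonempty :=
        Set.nonempty_Ioo.mpr q.2.1.2.2.1
      have hpp' : p = p' := Subtype.ext (gapSet_eq_of_inter p.2 p'.2
        ⟨x, key _ _ q x hx, key _ _ q' x (hq ▸ hx)⟩)
      subst hpp'
      exact congrArg _ (Subtype.ext hq)
    exact ENNReal.tsum_comp_le_tsum_of_injective hFinj
      (fun q : ↥(gapSet E) => edist (γ (q : ℝ × ℝ).1) (γ (q : ℝ × ℝ).2))

end AuxG


section Central
variable {X : Type*} [MetricSpace X] [MeasurableSpace X] [BorelSpace X]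

lemma isStarUG_of_null (f : X → ℝ) (hLIPne : eLipConst f ≠ ⊤)
    (ρ ρt : X → ℝ≥0∞) (N : Set X) (hNmeas : MeasurableSet N)
    (hρtN : ∀ x ∈ N, ρt x = eLipConst f) (hρtN' : ∀ x ∉ N, ρt x = ρ x)
    (Γ₀ : Set (CurveFragment X))
    (hweak : ∀ γ ∉ Γ₀, StarUGIneqOn f ρ γ)
    (g : X → ℝ≥0∞) (C : ℝ≥0∞) (hCne : C ≠ ⊤)
    (hgC : ∀ x ∉ N, g x ≤ C)
    (hginf : ∀ γ ∈ Γ₀, (∫⁻ x in CurveFragment.im γ, g x ∂(μH[1] : Measure X)) = ⊤) :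
    IsStarUG f ρt := by
  classical
  suffices key : ∀ γ : CurveFragment X, ∀ s ∈ γ.dom, ∀ t ∈ γ.dom, s ≤ t →
      ENNReal.ofReal |f (γ.toFun s) - f (γ.toFun t)| ≤
        (∫⁻ x in γ.im, ρt x ∂(μH[1] : Measure X)) + eLipConst f * γ.gapLength by
    intro γ s hs t ht
    rcases le_total s t with h | h
    · exact key γ s hs t ht h
    · rw [abs_sub_comm]; exact key γ t ht s hs h
  intro γ s hs t ht hst
  obtain ⟨L, hL, hbi⟩ := γ.biLip
  set E := γ.dom with hEdef
  have hLip : LipschitzOnWith L.toNNReal γ.toFun E :=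
    LipschitzOnWith.of_dist_le_mul fun u hu v hv => by
      rw [Real.coe_toNNReal L hL.le, Real.dist_eq]
      exact (hbi u hu v hv).2
  have hcont : ContinuousOn γ.toFun E := hLip.continuousOn
  have hinj : Set.InjOn γ.toFun E := by
    intro u hu v hv huv
    have h1 := (hbi u hu v hv).1
    rw [huv, dist_self] at h1
    have h2 : |u - v| ≤ 0 := by
      by_contra hc
      push_neg at hc
      exact absurd h1 (not_le.mpr (mul_pos (inv_pos.mpr hL) hc))
    exact sub_eq_zero.mp (abs_eq_zero.mp (le_antisymm h2 (abs_nonneg _)))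
  set E' := E ∩ Set.Icc s t with hE'def
  have hE'c : IsCompact E' := γ.compact.inter_right isClosed_Icc
  have hE'E : E' ⊆ E := Set.inter_subset_left
  set A := {u ∈ E' | γ.toFun u ∈ N} with hAdef
  have hAmeas : MeasurableSet A := mem_E_and_mem_measurable hE'c (hcont.mono hE'E) hNmeas
  set B := E' \ A with hBdef
  have hBmeas : MeasurableSet B := (hE'c.isClosed.measurableSet).diff hAmeas
  have hIccfin : volume (Set.Icc s t) ≠ ⊤ := by simp [Real.volume_Icc]
  have hBsubI : B ⊆ Set.Icc s t := fun u hu => hu.1.2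
  have hBsubE : B ⊆ E := fun u hu => hu.1.1
  have hBfin : volume B ≠ ⊤ := ne_top_of_le_ne_top hIccfin (measure_mono hBsubI)
  have hANsub : γ.toFun '' A ⊆ γ.im ∩ N := by
    rintro x ⟨u, ⟨⟨huE, _⟩, huN⟩, rfl⟩
    exact ⟨⟨u, huE, rfl⟩, huN⟩
  have himmeas : MeasurableSet γ.im :=
    (γ.compact.image_of_continuousOn hcont).isClosed.measurableSet
  have himle : ∀ S : Set ℝ, S ⊆ E →
      μH[1] (γ.toFun '' S) ≤ (L.toNNReal : ℝ≥0∞) * volume S := by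
    intro S hS
    have h := (hLip.mono hS).hausdorffMeasure_image_le (zero_le_one' ℝ)
    rwa [MeasureTheory.hausdorffMeasure_real, ENNReal.rpow_one] at h
  set c := eLipConst f * (L.toNNReal : ℝ≥0∞) with hc
  have hcne : c ≠ ⊤ := ENNReal.mul_ne_top hLIPne ENNReal.coe_ne_top
  have main : ∀ ε : ℝ, 0 < ε →
      ENNReal.ofReal |f (γ.toFun s) - f (γ.toFun t)| ≤
        ((∫⁻ x in γ.im, ρt x ∂(μH[1] : Measure X)) + eLipConst f * γ.gapLength) +
          c * ENNReal.ofReal ε := by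
    intro ε hε
    obtain ⟨K, hKB, hKc, hKvol⟩ :=
      hBmeas.exists_isCompact_lt_add hBfin (ε := ENNReal.ofReal ε)
        (by simp [hε, ENNReal.ofReal_eq_zero, not_le])
    have hKfin : volume K ≠ ⊤ := ne_top_of_le_ne_top hBfin (measure_mono hKB)
    have hBK : volume (B \ K) ≤ ENNReal.ofReal ε := by
      rw [measure_diff hKB hKc.measurableSet.nullMeasurableSet hKfin]
      rw [tsub_le_iff_right, add_comm]
      exact hKvol.le
    set K' : Set ℝ := K ∪ {s, t} with hK'def
    have hsK' : s ∈ K' := by right; left; rfl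
    have htK' : t ∈ K' := by right; right; rfl
    have hKE' : K ⊆ E' := hKB.trans Set.diff_subset
    have hstE : ({s, t} : Set ℝ) ⊆ E :=
      Set.insert_subset_iff.mpr ⟨hs, Set.singleton_subset_iff.mpr ht⟩
    have hK'E : K' ⊆ E := Set.union_subset (hKE'.trans hE'E) hstE
    have hK'I : K' ⊆ Set.Icc s t := Set.union_subset (hKB.trans hBsubI)
      (Set.insert_subset_iff.mpr ⟨Set.left_mem_Icc.mpr hst,
        Set.singleton_subset_iff.mpr (Set.right_mem_Icc.mpr hst)⟩)
    have hK'c : IsCompact K' := hKc.union ((Set.finite_singleton t).insert s).isCompact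
    set γ' : CurveFragment X :=
      ⟨γ.toFun, K', hK'c, ⟨s, hsK'⟩, ⟨L, hL, fun u hu v hv =>
        hbi u (hK'E hu) v (hK'E hv)⟩⟩ with hγ'def
    have him' : γ'.im = γ.toFun '' K' := rfl
    have him'im : γ'.im ⊆ γ.im := Set.image_mono hK'E
    have him'meas : MeasurableSet γ'.im :=
      (hK'c.image_of_continuousOn (hcont.mono hK'E)).isClosed.measurableSet
    have hK'fin : volume K' ≠ ⊤ := ne_top_of_le_ne_top hIccfin (measure_mono hK'I)
    have hH1fin : μH[1] γ'.im ≠ ⊤ :=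
      ne_top_of_le_ne_top (ENNReal.mul_ne_top ENNReal.coe_ne_top hK'fin) (himle K' hK'E)
    have hK'N : ∀ u ∈ K, γ.toFun u ∉ N := fun u hu hN => (hKB hu).2 ⟨(hKB hu).1, hN⟩
    have himN : γ'.im ∩ N ⊆ {γ.toFun s, γ.toFun t} := by
      rintro x ⟨⟨u, hu, rfl⟩, hxN⟩
      rcases hu with hu | hu
      · exact absurd hxN (hK'N u hu)
      · rcases hu with rfl | hu
        · exact Or.inl rfl
        · rw [Set.mem_singleton_iff] at hu
          exact Or.inr (by rw [hu]; rfl)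
    have himNnull : μH[1] (γ'.im ∩ N) = 0 := measure_mono_null himN (pair_null _ _)
    have hγ'notΓ : γ' ∉ Γ₀ := by
      intro hmem
      have h1 := hginf γ' hmem
      have hsplit : (∫⁻ x in γ'.im, g x ∂(μH[1] : Measure X)) ≤
          (∫⁻ x in γ'.im \ N, g x ∂(μH[1] : Measure X)) +
          (∫⁻ x in γ'.im ∩ N, g x ∂(μH[1] : Measure X)) := by
        conv_lhs => rw [← Set.diff_union_inter γ'.im N]
        exact lintegral_union_le _ _ _
      have hb1 : (∫⁻ x in γ'.im \ N, g x ∂(μH[1] : Measure X)) ≤ C * μH[1] γ'.im := by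
        calc (∫⁻ x in γ'.im \ N, g x ∂(μH[1] : Measure X))
            ≤ ∫⁻ _x in γ'.im \ N, C ∂(μH[1] : Measure X) :=
              setLIntegral_mono measurable_const (fun x hx => hgC x hx.2)
        _ = C * μH[1] (γ'.im \ N) := setLIntegral_const _ _
        _ ≤ _ := mul_le_mul_right (measure_mono Set.diff_subset) _
      have hb2 : (∫⁻ x in γ'.im ∩ N, g x ∂(μH[1] : Measure X)) = 0 :=
        setLIntegral_measure_zero _ _ himNnull
      have hfin : (∫⁻ x in γ'.im, g x ∂(μH[1] : Measure X)) ≤ C * μH[1] γ'.im + 0 :=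
        hsplit.trans (add_le_add hb1 (le_of_eq hb2))
      rw [add_zero] at hfin
      exact ne_top_of_le_ne_top (ENNReal.mul_ne_top hCne hH1fin) hfin h1
    have hineq := hweak γ' hγ'notΓ s hsK' t htK'
    have hρint : (∫⁻ x in γ'.im, ρ x ∂(μH[1] : Measure X)) ≤
        ∫⁻ x in γ.im \ N, ρt x ∂(μH[1] : Measure X) := by
      have hsplit : (∫⁻ x in γ'.im, ρ x ∂(μH[1] : Measure X)) ≤
          (∫⁻ x in γ'.im \ N, ρ x ∂(μH[1] : Measure X)) +
          (∫⁻ x in γ'.im ∩ N, ρ x ∂(μH[1] : Measure X)) := by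
        conv_lhs => rw [← Set.diff_union_inter γ'.im N]
        exact lintegral_union_le _ _ _
      have hz : (∫⁻ x in γ'.im ∩ N, ρ x ∂(μH[1] : Measure X)) = 0 :=
        setLIntegral_measure_zero _ _ himNnull
      have hcongr : (∫⁻ x in γ'.im \ N, ρ x ∂(μH[1] : Measure X)) =
          ∫⁻ x in γ'.im \ N, ρt x ∂(μH[1] : Measure X) :=
        setLIntegral_congr_fun (him'meas.diff hNmeas)
          (fun x hx => (hρtN' x hx.2).symm)
      calc (∫⁻ x in γ'.im, ρ x ∂(μH[1] : Measure X)) ≤ _ + _ := hsplit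
      _ = ∫⁻ x in γ'.im \ N, ρt x ∂(μH[1] : Measure X) := by rw [hz, add_zero, hcongr]
      _ ≤ _ := lintegral_mono_set (Set.diff_subset_diff_left him'im)
    have hgap : γ'.gapLength ≤ μH[1] (γ.toFun '' (E' \ K')) + γ.gapLength := by
      have h := gapLength_restrict_le γ.compact hcont hinj hK'E hK'I
      exact h
    have hsubAB : (E' \ K') ⊆ A ∪ (B \ K) := by
      rintro u ⟨hu, huK'⟩
      by_cases hA : u ∈ A
      · exact Or.inl hA
      · exact Or.inr ⟨⟨hu, hA⟩, fun hK => huK' (Or.inl hK)⟩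
    have himE' : μH[1] (γ.toFun '' (E' \ K')) ≤
        μH[1] (γ.toFun '' A) + (L.toNNReal : ℝ≥0∞) * ENNReal.ofReal ε := by
      calc μH[1] (γ.toFun '' (E' \ K')) ≤ μH[1] (γ.toFun '' A ∪ γ.toFun '' (B \ K)) :=
            measure_mono (by rw [← Set.image_union]; exact Set.image_mono hsubAB)
      _ ≤ μH[1] (γ.toFun '' A) + μH[1] (γ.toFun '' (B \ K)) := measure_union_le _ _
      _ ≤ μH[1] (γ.toFun '' A) + (L.toNNReal : ℝ≥0∞) * ENNReal.ofReal ε := by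
          refine add_le_add_right ?_ _
          exact (himle _ (Set.diff_subset.trans hBsubE)).trans (mul_le_mul_right hBK _)
    have hNint : eLipConst f * μH[1] (γ.toFun '' A) ≤
        ∫⁻ x in γ.im ∩ N, ρt x ∂(μH[1] : Measure X) := by
      have hconst : (∫⁻ x in γ.im ∩ N, ρt x ∂(μH[1] : Measure X)) =
          eLipConst f * μH[1] (γ.im ∩ N) := by
        rw [← setLIntegral_const]
        exact setLIntegral_congr_fun (himmeas.inter hNmeas)
          (fun x hx => hρtN x hx.2)
      rw [hconst]
      exact mul_le_mul_right (measure_mono hANsub) _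
    calc ENNReal.ofReal |f (γ.toFun s) - f (γ.toFun t)|
        ≤ (∫⁻ x in γ'.im, ρ x ∂(μH[1] : Measure X)) + eLipConst f * γ'.gapLength := hineq
    _ ≤ (∫⁻ x in γ.im \ N, ρt x ∂(μH[1] : Measure X)) +
        eLipConst f * ((μH[1] (γ.toFun '' A) + (L.toNNReal : ℝ≥0∞) * ENNReal.ofReal ε) +
          γ.gapLength) := by
        refine add_le_add hρint (mul_le_mul_right ?_ _)
        exact hgap.trans (add_le_add_left himE' _)
    _ = ((∫⁻ x in γ.im \ N, ρt x ∂(μH[1] : Measure X)) +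
          eLipConst f * μH[1] (γ.toFun '' A)) + eLipConst f * γ.gapLength +
          c * ENNReal.ofReal ε := by rw [hc]; ring
    _ ≤ ((∫⁻ x in γ.im \ N, ρt x ∂(μH[1] : Measure X)) +
          (∫⁻ x in γ.im ∩ N, ρt x ∂(μH[1] : Measure X))) + eLipConst f * γ.gapLength +
          c * ENNReal.ofReal ε := by
        exact add_le_add_left (add_le_add_left (add_le_add_right hNint _) _) _
    _ = ((∫⁻ x in γ.im, ρt x ∂(μH[1] : Measure X)) + eLipConst f * γ.gapLength) +
          c * ENNReal.ofReal ε := by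
        rw [← lintegral_union (himmeas.inter hNmeas) Set.disjoint_sdiff_inter,
          Set.diff_union_inter]
  refine ENNReal.le_of_forall_pos_le_add fun δ hδ _hTfin => ?_
  by_cases hc0 : c = 0
  · have h := main 1 one_pos
    rw [hc0, zero_mul, add_zero] at h
    exact h.trans le_self_add
  · set ε : ℝ := ((δ : ℝ≥0∞) / c).toReal with hεdef
    have hdivne : (δ : ℝ≥0∞) / c ≠ ⊤ := (ENNReal.div_lt_top ENNReal.coe_ne_top hc0).ne
    have hdivpos : 0 < (δ : ℝ≥0∞) / c :=
      ENNReal.div_pos (by exact_mod_cast hδ.ne') hcne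
    have hεpos : 0 < ε := ENNReal.toReal_pos hdivpos.ne' hdivne
    have h := main ε hεpos
    refine h.trans (add_le_add_right ?_ _)
    rw [hεdef, ENNReal.ofReal_toReal hdivne]
    exact ENNReal.mul_div_le
end Central

open scoped Classical in
/-- A weak `∗`-upper gradient `ρ ∈ L^∞(μ)` of a Lipschitz function `f` has a
`μ`-a.e. representative that is a genuine `∗`-upper gradient: namely
`ρ̃ = LIP(f)·χ_N + ρ·χ_{X∖N}` for a suitable Borel `μ`-null set `N`. -/
theorem weakStarUG_ae_representative
    [CompleteSpace X] [TopologicalSpace.SeparableSpace X]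
    (μ : Measure X) (hμ : ∀ s : Set X, Bornology.IsBounded s → μ s < ⊤)
    (f : X → ℝ) (hf : ∃ K : ℝ≥0, LipschitzWith K f)
    (ρ : X → ℝ≥0∞) (hmeas : Measurable ρ) (hbdd : essSup ρ μ < ⊤)
    (hUG : IsWeakStarUG μ f ρ) :
    ∃ N : Set X, MeasurableSet N ∧ μ N = 0 ∧
      IsStarUG f (fun x => if x ∈ N then eLipConst f else ρ x) ∧
      (fun x => if x ∈ N then eLipConst f else ρ x) =ᵐ[μ] ρ := by
  classical
  obtain ⟨Kf, hKf⟩ := hf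
  have hLIPne : eLipConst f ≠ ⊤ :=
    ne_top_of_le_ne_top ENNReal.coe_ne_top (iInf₂_le Kf hKf)
  obtain ⟨Γ₀, hΓ₀, hweak⟩ := hUG
  have hex : ∀ n : ℕ, ∃ gn : X → ℝ≥0∞, Measurable gn ∧
      (∀ γ ∈ Γ₀, 1 ≤ ∫⁻ x in γ.im, gn x ∂(μH[1] : Measure X)) ∧
      essSup gn μ ≤ (2⁻¹ : ℝ≥0∞) ^ n := by
    intro n
    have hpos : (0 : ℝ≥0∞) < (2⁻¹ : ℝ≥0∞) ^ n := by
      refine pos_iff_ne_zero.mpr (pow_ne_zero n ?_)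
      simp
    have hlt : ModInfty μ Γ₀ < (2⁻¹ : ℝ≥0∞) ^ n := by rw [hΓ₀]; exact hpos
    rw [ModInfty, iInf_lt_iff] at hlt
    obtain ⟨gn, hlt⟩ := hlt
    rw [iInf_lt_iff] at hlt
    obtain ⟨hm, hlt⟩ := hlt
    rw [iInf_lt_iff] at hlt
    obtain ⟨hadm, hlt⟩ := hlt
    exact ⟨gn, hm, hadm, hlt.le⟩
  choose gseq hgmeas hgadm hgsup using hex
  set g : X → ℝ≥0∞ := fun x => ∑' n, gseq n x with hgdef
  have hgmeas' : Measurable g := Measurable.ennreal_tsum hgmeas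
  set C : ℝ≥0∞ := ∑' n : ℕ, (2⁻¹ : ℝ≥0∞) ^ n with hCdef
  have hCne : C ≠ ⊤ := by
    rw [hCdef, ENNReal.tsum_geometric]
    simp [ENNReal.inv_eq_top, tsub_eq_zero_iff_le]
  have haeC : ∀ᵐ x ∂μ, g x ≤ C := by
    have hall : ∀ᵐ x ∂μ, ∀ n : ℕ, gseq n x ≤ (2⁻¹ : ℝ≥0∞) ^ n :=
      ae_all_iff.mpr fun n => (ENNReal.ae_le_essSup (gseq n)).mono fun x hx => hx.trans (hgsup n)
    exact hall.mono fun x hx => ENNReal.tsum_le_tsum hx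
  set N : Set X := {x | C < g x} with hNdef
  have hNmeas : MeasurableSet N := measurableSet_lt measurable_const hgmeas'
  have hNnull : μ N = 0 := by
    have heq : N = {x | ¬ g x ≤ C} := by ext x; simp [hNdef, not_le]
    rw [heq]
    exact haeC
  have hgC : ∀ x, x ∉ N → g x ≤ C := fun x hx => not_lt.1 hx
  have hginf : ∀ γ ∈ Γ₀, (∫⁻ x in CurveFragment.im γ, g x ∂(μH[1] : Measure X)) = ⊤ := by
    intro γ hγ
    refine top_unique ?_
    rw [hgdef]
    simp only
    rw [lintegral_tsum (fun n => (hgmeas n).aemeasurable)]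
    calc (⊤ : ℝ≥0∞) = ∑' _ : ℕ, (1 : ℝ≥0∞) :=
        (ENNReal.tsum_const_eq_top_of_ne_zero one_ne_zero).symm
    _ ≤ _ := ENNReal.tsum_le_tsum fun n => hgadm n γ hγ
  refine ⟨N, hNmeas, hNnull, ?_, ?_⟩
  · exact isStarUG_of_null f hLIPne ρ _ N hNmeas (fun x hx => if_pos hx)
      (fun x hx => if_neg hx) Γ₀ hweak g C hCne (fun x hx => hgC x hx) hginf
  · filter_upwards [measure_eq_zero_iff_ae_notMem.mp hNnull] with x hx
    simp [if_neg hx]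
end

section
/- If $\rho:X\to[0,\infty]$ is lower semicontinuous, then its extension $\bar\rho:\operatorname{sh}(X)\to[0,\infty]$ defined by $\bar\rho(\iota_x+t(\iota_y-\iota_x))=t\rho(y)+(1-t)\rho(x)$ is lower semicontinuous on the semihull $\operatorname{sh}(X)$. -/
open Filter Topology Set
open scoped ENNReal NNReal

variable {X : Type*} [MetricSpace X]

/-- The canonical "evaluation" embedding of `X` into functionals on real functions on `X`;
this realizes the isometric embedding of `X` into its Lipschitz free space (whose elements
are functionals on Lipschitz functions vanishing at a base point). -/
def iotaF (x : X) : (X → ℝ) → ℝ := fun f => f x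

/-- The semihull `sh(X)`: the union of the segments `[ι_x, ι_y]`, `x, y ∈ X`, inside the
free space. -/
def semihull (X : Type*) [MetricSpace X] : Set ((X → ℝ) → ℝ) :=
  {v | ∃ x y : X, ∃ t ∈ Set.Icc (0 : ℝ) 1, v = iotaF x + t • (iotaF y - iotaF x)}

/-- The free-space (dual) distance with base point `x₀`: the supremum of `|u(f) - v(f)|`
over `1`-Lipschitz functions `f` vanishing at `x₀`. -/
noncomputable def freeDist (x₀ : X) (u v : (X → ℝ) → ℝ) : ℝ :=
  ⨆ f : {f : X → ℝ // LipschitzWith 1 f ∧ f x₀ = 0}, |u f.1 - v f.1|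

/-- A triangular bump function of height `r` and radius `δ` centered at `p`. -/
noncomputable def bump (p : X) (r δ : ℝ) : X → ℝ := fun z => max 0 (r * (1 - dist z p / δ))

lemma bump_nonneg (p : X) (r δ : ℝ) (z : X) : 0 ≤ bump p r δ z := le_max_left _ _

lemma bump_self (p : X) {r : ℝ} (hr : 0 ≤ r) (δ : ℝ) : bump p r δ p = r := by
  simp [bump, hr]

lemma bump_le {p : X} {r δ : ℝ} (hr : 0 ≤ r) (hδ : 0 < δ) (z : X) : bump p r δ z ≤ r := by
  refine max_le hr ?_
  have h1 : 0 ≤ dist z p / δ := div_nonneg dist_nonneg hδ.le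
  nlinarith

lemma bump_of_far {p : X} {r δ : ℝ} (hr : 0 ≤ r) (hδ : 0 < δ) {z : X} (hz : δ ≤ dist z p) :
    bump p r δ z = 0 := by
  have h1 : (1:ℝ) ≤ dist z p / δ := (one_le_div hδ).2 hz
  have : r * (1 - dist z p / δ) ≤ 0 := by nlinarith
  simp [bump, max_eq_left this]

lemma bump_lipschitz {p : X} {r δ : ℝ} (hr : 0 ≤ r) (hδ : 0 < δ) :
    LipschitzWith (Real.toNNReal (r / δ)) (bump p r δ) := by
  refine LipschitzWith.of_dist_le_mul fun z w => ?_
  have hcoe : ((Real.toNNReal (r / δ) : ℝ≥0) : ℝ) = r / δ :=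
    Real.coe_toNNReal _ (div_nonneg hr hδ.le)
  rw [Real.dist_eq, hcoe]
  have h1 : |bump p r δ z - bump p r δ w|
      ≤ |r * (1 - dist z p / δ) - r * (1 - dist w p / δ)| := by
    have := abs_max_sub_max_le_abs (r * (1 - dist z p / δ)) (r * (1 - dist w p / δ)) 0
    simpa [bump, max_comm] using this
  have h2 : r * (1 - dist z p / δ) - r * (1 - dist w p / δ) = (r / δ) * (dist w p - dist z p) := by
    field_simp
    ring
  have h3 : |dist w p - dist z p| ≤ dist w z := abs_dist_sub_le w z p
  calc |bump p r δ z - bump p r δ w| ≤ |r * (1 - dist z p / δ) - r * (1 - dist w p / δ)| := h1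
    _ = (r / δ) * |dist w p - dist z p| := by
        rw [h2, abs_mul, abs_of_nonneg (div_nonneg hr hδ.le)]
    _ ≤ (r / δ) * dist z w := by
        rw [dist_comm z w]
        exact mul_le_mul_of_nonneg_left h3 (div_nonneg hr hδ.le)

/-- The "convex" extension `ρ̄(ι_x + t(ι_y - ι_x)) = t ρ(y) + (1 - t) ρ(x)`
of a lower semicontinuous function `ρ : X → [0, ∞]` is well defined and (sequentially) lower
semicontinuous on the semihull with respect to the free-space distance. -/
theorem extension_lowerSemicontinuous (x₀ : X)
    (ρ : X → ℝ≥0∞) (hρ : LowerSemicontinuous ρ) :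
    ∃ ρb : ((X → ℝ) → ℝ) → ℝ≥0∞,
      (∀ x y : X, ∀ t ∈ Set.Icc (0 : ℝ) 1,
        ρb (iotaF x + t • (iotaF y - iotaF x)) =
          ENNReal.ofReal t * ρ y + ENNReal.ofReal (1 - t) * ρ x) ∧
      (∀ v ∈ semihull X, ∀ vj : ℕ → (X → ℝ) → ℝ, (∀ j, vj j ∈ semihull X) →
        Tendsto (fun j => freeDist x₀ (vj j) v) atTop (𝓝 0) →
        ρb v ≤ liminf (fun j => ρb (vj j)) atTop) := by
  classical
  have hval : ∀ (x y : X) (t : ℝ) (f : X → ℝ),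
      (iotaF x + t • (iotaF y - iotaF x)) f = (1 - t) * f x + t * f y := by
    intro x y t f
    simp only [Pi.add_apply, Pi.smul_apply, Pi.sub_apply, smul_eq_mul, iotaF]
    ring
  set ρb : ((X → ℝ) → ℝ) → ℝ≥0∞ :=
    fun v => ∑' z : X, ENNReal.ofReal (v (fun w => if w = z then 1 else 0)) * ρ z with hρb
  have hform : ∀ x y : X, ∀ t ∈ Set.Icc (0 : ℝ) 1,
      ρb (iotaF x + t • (iotaF y - iotaF x)) =
        ENNReal.ofReal t * ρ y + ENNReal.ofReal (1 - t) * ρ x := by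
    intro x y t ht
    obtain ⟨ht0, ht1⟩ := ht
    rw [hρb]
    simp only [hval]
    by_cases hxy : x = y
    · subst hxy
      rw [tsum_eq_single x (by
        intro z hz
        rw [if_neg (Ne.symm hz)]
        norm_num)]
      rw [if_pos rfl]
      have e : ENNReal.ofReal ((1 - t) * 1 + t * 1) = ENNReal.ofReal t + ENNReal.ofReal (1 - t) := by
        rw [← ENNReal.ofReal_add ht0 (by linarith)]
        congr 1
        ring
      rw [e, add_mul]
    · rw [tsum_eq_sum (s := {x, y}) (by
        intro z hz
        simp only [Finset.mem_insert, Finset.mem_singleton, not_or] at hz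
        rw [if_neg (Ne.symm hz.1), if_neg (Ne.symm hz.2)]
        norm_num)]
      rw [Finset.sum_pair hxy]
      rw [if_pos rfl, if_pos rfl, if_neg hxy, if_neg (Ne.symm hxy)]
      norm_num
      exact add_comm _ _
  refine ⟨ρb, hform, ?_⟩
  rintro v ⟨x, y, t, ht, rfl⟩ vj hvj hconv
  choose xs ys ts hts hrep using hvj
  set v : (X → ℝ) → ℝ := iotaF x + t • (iotaF y - iotaF x) with hv
  set L := liminf (fun j => ρb (vj j)) atTop with hL
  -- Bound on the value of an element of the semihull at a 1-Lipschitz function vanishing at x₀.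
  have habs : ∀ (p q : X) (s : ℝ), s ∈ Set.Icc (0:ℝ) 1 → ∀ f : X → ℝ,
      LipschitzWith 1 f → f x₀ = 0 →
      |(iotaF p + s • (iotaF q - iotaF p)) f| ≤ dist p x₀ + dist q x₀ := by
    intro p q s hs f hf hf0
    rw [hval]
    have hfp : |f p| ≤ dist p x₀ := by
      have := hf.dist_le_mul p x₀
      rw [Real.dist_eq, hf0, sub_zero, NNReal.coe_one, one_mul] at this
      exact this
    have hfq : |f q| ≤ dist q x₀ := by
      have := hf.dist_le_mul q x₀
      rw [Real.dist_eq, hf0, sub_zero, NNReal.coe_one, one_mul] at this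
      exact this
    have h1 : |(1 - s) * f p + s * f q| ≤ (1 - s) * |f p| + s * |f q| := by
      calc |(1 - s) * f p + s * f q| ≤ |(1 - s) * f p| + |s * f q| := abs_add_le _ _
        _ = (1 - s) * |f p| + s * |f q| := by
            rw [abs_mul, abs_mul, abs_of_nonneg (by linarith [hs.2]), abs_of_nonneg hs.1]
    nlinarith [abs_nonneg (f p), abs_nonneg (f q), hs.1, hs.2, hfp, hfq,
      mul_le_mul_of_nonneg_left hfp (by linarith [hs.2] : (0:ℝ) ≤ 1 - s),
      mul_le_mul_of_nonneg_left hfq hs.1,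
      mul_nonneg hs.1 dist_nonneg (b := dist p x₀),
      mul_nonneg (by linarith [hs.2] : (0:ℝ) ≤ 1 - s) (dist_nonneg (x := q) (y := x₀))]
  have hbdd : ∀ j, BddAbove (Set.range
      fun f : {f : X → ℝ // LipschitzWith 1 f ∧ f x₀ = 0} => |vj j f.1 - v f.1|) := by
    intro j
    refine ⟨dist (xs j) x₀ + dist (ys j) x₀ + (dist x x₀ + dist y x₀), ?_⟩
    rintro r ⟨f, rfl⟩
    have h1 := habs (xs j) (ys j) (ts j) (hts j) f.1 f.2.1 f.2.2
    have h2 := habs x y t ht f.1 f.2.1 f.2.2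
    rw [← hrep j] at h1
    rw [← hv] at h2
    calc |vj j f.1 - v f.1| ≤ |vj j f.1| + |v f.1| := abs_sub _ _
      _ ≤ _ := add_le_add h1 h2
  have hfd : ∀ j (f : X → ℝ), LipschitzWith 1 f → f x₀ = 0 →
      |vj j f - v f| ≤ freeDist x₀ (vj j) v := by
    intro j f hf hf0
    exact le_ciSup (hbdd j) ⟨f, hf, hf0⟩
  -- Key step: testing against nonnegative Lipschitz minorants of ρ.
  have keyA : ∀ (K : ℝ≥0) (g : X → ℝ), LipschitzWith K g → (∀ z, 0 ≤ g z) →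
      (∀ z, ENNReal.ofReal (g z) ≤ ρ z) →
      ENNReal.ofReal ((1 - t) * g x + t * g y) ≤ L := by
    intro K g hgl hg0 hgρ
    set a : ℝ := (1 - t) * g x + t * g y with ha
    set aj : ℕ → ℝ := fun j => (1 - ts j) * g (xs j) + ts j * g (ys j) with haj
    have htend : Tendsto aj atTop (𝓝 a) := by
      by_cases hK : (K : ℝ) = 0
      · have hconst : ∀ z w : X, g z = g w := by
          intro z w
          have h := hgl.dist_le_mul z w
          rw [hK, zero_mul] at h
          exact dist_le_zero.1 h
        have he : aj = fun _ => a := by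
          funext j
          simp only [haj, ha, hconst (xs j) x, hconst (ys j) x, hconst y x]
          ring
        rw [he]
        exact tendsto_const_nhds
      · have hKpos : (0:ℝ) < K := lt_of_le_of_ne K.coe_nonneg (Ne.symm hK)
        set c : ℝ := g x₀ with hc
        set f' : X → ℝ := fun z => (K : ℝ)⁻¹ * (g z - c) with hf'
        have hf'lip : LipschitzWith 1 f' := by
          refine LipschitzWith.of_dist_le_mul fun z w => ?_
          have h1 := hgl.dist_le_mul z w
          rw [Real.dist_eq] at h1 ⊢
          have he : f' z - f' w = (K:ℝ)⁻¹ * (g z - g w) := by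
            simp only [hf']
            ring
          rw [he, abs_mul, abs_of_nonneg (inv_nonneg.2 hKpos.le), NNReal.coe_one, one_mul]
          calc (K:ℝ)⁻¹ * |g z - g w| ≤ (K:ℝ)⁻¹ * ((K:ℝ) * dist z w) := by
                exact mul_le_mul_of_nonneg_left h1 (inv_nonneg.2 hKpos.le)
            _ = dist z w := by field_simp
        have hf'0 : f' x₀ = 0 := by simp [hf', hc]
        have hKey : ∀ (p q : X) (s : ℝ),
            (K:ℝ) * ((iotaF p + s • (iotaF q - iotaF p)) f') = ((1 - s) * g p + s * g q) - c := by
          intro p q s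
          rw [hval]
          simp only [hf']
          field_simp
          ring
        have hb : ∀ j, |aj j - a| ≤ (K:ℝ) * freeDist x₀ (vj j) v := by
          intro j
          have e1 : aj j - a = (K:ℝ) * (vj j f' - v f') := by
            have e2 := hKey (xs j) (ys j) (ts j)
            have e3 := hKey x y t
            rw [← hrep j] at e2
            rw [← hv] at e3
            rw [mul_sub, e2, e3, haj, ha]
            ring
          rw [e1, abs_mul, abs_of_nonneg K.coe_nonneg]
          exact mul_le_mul_of_nonneg_left (hfd j f' hf'lip hf'0) K.coe_nonneg
        have h0 : Tendsto (fun j => |aj j - a|) atTop (𝓝 0) :=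
          squeeze_zero (fun j => abs_nonneg _) hb
            (by simpa using hconv.const_mul (K:ℝ))
        rw [tendsto_iff_dist_tendsto_zero]
        simpa [Real.dist_eq] using h0
    have hge : ∀ j, ENNReal.ofReal (aj j) ≤ ρb (vj j) := by
      intro j
      rw [hrep j, hform (xs j) (ys j) (ts j) (hts j)]
      obtain ⟨hs0, hs1⟩ := hts j
      have h1s : (0:ℝ) ≤ 1 - ts j := by linarith
      calc ENNReal.ofReal (aj j)
          = ENNReal.ofReal (1 - ts j) * ENNReal.ofReal (g (xs j))
            + ENNReal.ofReal (ts j) * ENNReal.ofReal (g (ys j)) := by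
            rw [haj, ENNReal.ofReal_add (mul_nonneg h1s (hg0 _)) (mul_nonneg hs0 (hg0 _)),
              ENNReal.ofReal_mul h1s, ENNReal.ofReal_mul hs0]
        _ ≤ ENNReal.ofReal (1 - ts j) * ρ (xs j) + ENNReal.ofReal (ts j) * ρ (ys j) := by
            gcongr <;> exact hgρ _
        _ = ENNReal.ofReal (ts j) * ρ (ys j) + ENNReal.ofReal (1 - ts j) * ρ (xs j) :=
            add_comm _ _
    calc ENNReal.ofReal a = liminf (fun j => ENNReal.ofReal (aj j)) atTop :=
          (Tendsto.liminf_eq (ENNReal.tendsto_ofReal htend)).symm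
      _ ≤ L := liminf_le_liminf (Eventually.of_forall hge)
  -- finding balls on which ρ is bounded below
  have hball : ∀ (p : X) (r : ℝ≥0), ((r : ℝ≥0∞) < ρ p ∨ r = 0) →
      ∃ δ > 0, ∀ z, dist z p < δ → ENNReal.ofReal (r:ℝ) ≤ ρ z := by
    rintro p r (hr | rfl)
    · obtain ⟨δ, hδ, h⟩ := Metric.eventually_nhds_iff.1 (hρ p _ hr)
      refine ⟨δ, hδ, fun z hz => ?_⟩
      rw [ENNReal.ofReal_coe_nnreal]
      exact (h hz).le
    · exact ⟨1, one_pos, fun z _ => by simp⟩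
  -- Key step B: the bound for approximating values
  have keyB : ∀ r₁ r₂ : ℝ≥0, ((r₁ : ℝ≥0∞) < ρ x ∨ r₁ = 0) → ((r₂ : ℝ≥0∞) < ρ y ∨ r₂ = 0) →
      ENNReal.ofReal ((1 - t) * (r₁:ℝ) + t * (r₂:ℝ)) ≤ L := by
    intro r₁ r₂ h₁ h₂
    by_cases hxy : x = y
    · subst hxy
      obtain ⟨r, hr, hr₁, hr₂⟩ : ∃ r : ℝ≥0, ((r : ℝ≥0∞) < ρ x ∨ r = 0) ∧ r₁ ≤ r ∧ r₂ ≤ r := by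
        rcases le_total r₁ r₂ with h | h
        · exact ⟨r₂, h₂, h, le_rfl⟩
        · exact ⟨r₁, h₁, le_rfl, h⟩
      obtain ⟨δ, hδ, hb⟩ := hball x r hr
      have hgρ : ∀ z, ENNReal.ofReal (bump x (r:ℝ) δ z) ≤ ρ z := by
        intro z
        by_cases hz : dist z x < δ
        · exact le_trans (ENNReal.ofReal_le_ofReal (bump_le r.coe_nonneg hδ z)) (hb z hz)
        · rw [bump_of_far r.coe_nonneg hδ (not_lt.1 hz)]
          simp
      have hA := keyA _ _ (bump_lipschitz r.coe_nonneg hδ) (bump_nonneg x (r:ℝ) δ) hgρ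
      rw [bump_self x r.coe_nonneg δ] at hA
      refine le_trans (ENNReal.ofReal_le_ofReal ?_) hA
      have e1 : (r₁:ℝ) ≤ r := hr₁
      have e2 : (r₂:ℝ) ≤ r := hr₂
      nlinarith [ht.1, ht.2, mul_le_mul_of_nonneg_left e1 (by linarith [ht.2] : (0:ℝ) ≤ 1 - t),
        mul_le_mul_of_nonneg_left e2 ht.1]
    · obtain ⟨δ₁, hδ₁, hb₁⟩ := hball x r₁ h₁
      obtain ⟨δ₂, hδ₂, hb₂⟩ := hball y r₂ h₂
      set δ : ℝ := min (min δ₁ δ₂) (dist x y / 2) with hδdef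
      have hdxy : 0 < dist x y := dist_pos.2 hxy
      have hδ : 0 < δ := lt_min (lt_min hδ₁ hδ₂) (by linarith)
      have hδd : δ ≤ dist x y / 2 := min_le_right _ _
      have hδ1 : δ ≤ δ₁ := le_trans (min_le_left _ _) (min_le_left _ _)
      have hδ2 : δ ≤ δ₂ := le_trans (min_le_left _ _) (min_le_right _ _)
      set g : X → ℝ := fun z => bump x (r₁:ℝ) δ z + bump y (r₂:ℝ) δ z with hg
      have hgl : LipschitzWith (Real.toNNReal ((r₁:ℝ)/δ) + Real.toNNReal ((r₂:ℝ)/δ)) g :=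
        (bump_lipschitz r₁.coe_nonneg hδ).add (bump_lipschitz r₂.coe_nonneg hδ)
      have hg0 : ∀ z, 0 ≤ g z := fun z =>
        add_nonneg (bump_nonneg _ _ _ _) (bump_nonneg _ _ _ _)
      have hdisj : ∀ z, dist z x < δ → ¬ dist z y < δ := by
        intro z hzx hzy
        have h3 : dist x y ≤ dist z x + dist z y := by
          have := dist_triangle x z y
          rw [dist_comm x z] at this
          linarith
        linarith
      have hgρ : ∀ z, ENNReal.ofReal (g z) ≤ ρ z := by
        intro z
        by_cases h1 : dist z x < δ
        · have h2 : bump y (r₂:ℝ) δ z = 0 :=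
            bump_of_far r₂.coe_nonneg hδ (not_lt.1 (hdisj z h1))
          have e : g z = bump x (r₁:ℝ) δ z := by rw [hg]; simp [h2]
          rw [e]
          exact le_trans (ENNReal.ofReal_le_ofReal (bump_le r₁.coe_nonneg hδ z))
            (hb₁ z (lt_of_lt_of_le h1 hδ1))
        · have h2 : bump x (r₁:ℝ) δ z = 0 := bump_of_far r₁.coe_nonneg hδ (not_lt.1 h1)
          by_cases h3 : dist z y < δ
          · have e : g z = bump y (r₂:ℝ) δ z := by rw [hg]; simp [h2]
            rw [e]
            exact le_trans (ENNReal.ofReal_le_ofReal (bump_le r₂.coe_nonneg hδ z))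
              (hb₂ z (lt_of_lt_of_le h3 hδ2))
          · have h4 : bump y (r₂:ℝ) δ z = 0 := bump_of_far r₂.coe_nonneg hδ (not_lt.1 h3)
            have e : g z = 0 := by rw [hg]; simp [h2, h4]
            rw [e]
            simp
      have hgx : g x = (r₁:ℝ) := by
        have h0 : bump y (r₂:ℝ) δ x = 0 :=
          bump_of_far r₂.coe_nonneg hδ (by rw [dist_comm x y] at hδd ⊢; linarith [dist_nonneg (x := x) (y := y)])
        rw [hg]
        simp only [h0, add_zero]
        exact bump_self x r₁.coe_nonneg δ
      have hgy : g y = (r₂:ℝ) := by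
        have h0 : bump x (r₁:ℝ) δ y = 0 :=
          bump_of_far r₁.coe_nonneg hδ (by linarith [dist_nonneg (x := y) (y := x), dist_comm y x ▸ hδd])
        rw [hg]
        simp only [h0, zero_add]
        exact bump_self y r₂.coe_nonneg δ
      have hA := keyA _ _ hgl hg0 hgρ
      rw [hgx, hgy] at hA
      exact hA
  -- assembling: write ρ x and ρ y as suprema
  rw [hv, hform x y t ht]
  have ht1 : (0:ℝ) ≤ 1 - t := by linarith [ht.2]
  have hsup : ∀ a : ℝ≥0∞, a = ⨆ i : {r : ℝ≥0 // (r : ℝ≥0∞) < a ∨ r = 0}, (i.1 : ℝ≥0∞) := by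
    intro a
    apply le_antisymm
    · refine ENNReal.le_of_forall_nnreal_lt fun r hr => ?_
      exact le_iSup_of_le ⟨r, Or.inl hr⟩ le_rfl
    · refine iSup_le fun i => ?_
      rcases i.2 with h | h
      · exact h.le
      · simp [h]
  haveI n1 : Nonempty {r : ℝ≥0 // (r : ℝ≥0∞) < ρ y ∨ r = 0} := ⟨⟨0, Or.inr rfl⟩⟩
  haveI n2 : Nonempty {r : ℝ≥0 // (r : ℝ≥0∞) < ρ x ∨ r = 0} := ⟨⟨0, Or.inr rfl⟩⟩
  rw [hsup (ρ x), hsup (ρ y), ENNReal.mul_iSup, ENNReal.mul_iSup, ENNReal.iSup_add]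
  refine iSup_le fun i => ?_
  rw [ENNReal.add_iSup]
  refine iSup_le fun j => ?_
  have hB := keyB j.1 i.1 j.2 i.2
  calc ENNReal.ofReal t * (i.1 : ℝ≥0∞) + ENNReal.ofReal (1 - t) * (j.1 : ℝ≥0∞)
      = ENNReal.ofReal ((1 - t) * (j.1 : ℝ) + t * (i.1 : ℝ)) := by
        rw [ENNReal.ofReal_add (mul_nonneg ht1 j.1.coe_nonneg) (mul_nonneg ht.1 i.1.coe_nonneg),
          ENNReal.ofReal_mul ht1, ENNReal.ofReal_mul ht.1,
          ENNReal.ofReal_coe_nnreal, ENNReal.ofReal_coe_nnreal]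
        exact add_comm _ _
    _ ≤ L := hB
end

section
/- Let $\gamma$ be a curve fragment in a metric space $X$, and $(f_j)$ a sequence of Lipschitz functions converging pointwise to a Lipschitz $f$ with $\sup_j\operatorname{LIP}(f_j)<\infty$. Then for every $h\in L^1(\operatorname{dom}(\gamma))$, $\lim_{j\to\infty}\int_{\operatorname{dom}(\gamma)}h(t)(f_j\circ\gamma)'(t)\,dt=\int_{\operatorname{dom}(\gamma)}h(t)(f\circ\gamma)'(t)\,dt$. -/
open MeasureTheory Filter Topology Set
open scoped ENNReal NNReal

section ExtFn

noncomputable def extFn (F : ℝ → ℝ) (D : Set ℝ) (C : ℝ) (x : ℝ) : ℝ :=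
  sInf ((fun s => F s + C * |x - s|) '' D)

variable {D : Set ℝ} {C : ℝ} {F G : ℝ → ℝ}

lemma extFn_bddBelow (hC : 0 ≤ C) (hF : ∀ s ∈ D, ∀ t ∈ D, |F s - F t| ≤ C * |s - t|)
    {t₀ : ℝ} (ht₀ : t₀ ∈ D) (x : ℝ) :
    F t₀ - C * |x - t₀| ∈ lowerBounds ((fun s => F s + C * |x - s|) '' D) := by
  rintro y ⟨s, hs, rfl⟩
  have h1 : F t₀ - F s ≤ C * |s - t₀| := by
    calc F t₀ - F s ≤ |F t₀ - F s| := le_abs_self _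
    _ = |F s - F t₀| := abs_sub_comm _ _
    _ ≤ C * |s - t₀| := hF s hs t₀ ht₀
  have h2 : |s - t₀| ≤ |x - s| + |x - t₀| := by
    calc |s - t₀| ≤ |s - x| + |x - t₀| := abs_sub_le s x t₀
    _ = |x - s| + |x - t₀| := by rw [abs_sub_comm]
  show F t₀ - C * |x - t₀| ≤ F s + C * |x - s|
  nlinarith [mul_le_mul_of_nonneg_left h2 hC]

lemma extFn_le (hC : 0 ≤ C) (hF : ∀ s ∈ D, ∀ t ∈ D, |F s - F t| ≤ C * |s - t|)
    {s : ℝ} (hs : s ∈ D) (x : ℝ) : extFn F D C x ≤ F s + C * |x - s| :=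
  csInf_le ⟨_, extFn_bddBelow hC hF hs x⟩ ⟨s, hs, rfl⟩

lemma le_extFn (hD : D.Nonempty) {c x : ℝ} (hc : ∀ s ∈ D, c ≤ F s + C * |x - s|) :
    c ≤ extFn F D C x :=
  le_csInf (hD.image _) (by rintro y ⟨s, hs, rfl⟩; exact hc s hs)

lemma extFn_eqOn (hD : D.Nonempty) (hC : 0 ≤ C)
    (hF : ∀ s ∈ D, ∀ t ∈ D, |F s - F t| ≤ C * |s - t|)
    {t : ℝ} (ht : t ∈ D) : extFn F D C t = F t := by
  refine le_antisymm ?_ ?_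
  · have := extFn_le hC hF ht t
    simpa using this
  · refine le_extFn ⟨t, ht⟩ fun s hs => ?_
    have h1 : F t - F s ≤ C * |t - s| := by
      calc F t - F s ≤ |F t - F s| := le_abs_self _
      _ ≤ C * |t - s| := hF t ht s hs
    linarith

lemma extFn_lip (hD : D.Nonempty) (hC : 0 ≤ C)
    (hF : ∀ s ∈ D, ∀ t ∈ D, |F s - F t| ≤ C * |s - t|) (x y : ℝ) :
    |extFn F D C x - extFn F D C y| ≤ C * |x - y| := by
  have key : ∀ u v : ℝ, extFn F D C u - C * |u - v| ≤ extFn F D C v := by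
    intro u v
    refine le_extFn hD fun s hs => ?_
    have h1 := extFn_le hC hF hs u
    have h2 : |u - s| ≤ |u - v| + |v - s| := abs_sub_le u v s
    nlinarith [mul_le_mul_of_nonneg_left h2 hC]
  have k1 := key x y
  have k2 := key y x
  rw [abs_sub_comm y x] at k2
  rw [abs_sub_le_iff]
  constructor <;> linarith

lemma extFn_close (hD : D.Nonempty) (hC : 0 ≤ C)
    (hF : ∀ s ∈ D, ∀ t ∈ D, |F s - F t| ≤ C * |s - t|)
    (hG : ∀ s ∈ D, ∀ t ∈ D, |G s - G t| ≤ C * |s - t|)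
    {δ : ℝ} (hδ : ∀ s ∈ D, |F s - G s| ≤ δ) (x : ℝ) :
    |extFn F D C x - extFn G D C x| ≤ δ := by
  have key : ∀ (F' G' : ℝ → ℝ), (∀ s ∈ D, ∀ t ∈ D, |F' s - F' t| ≤ C * |s - t|) →
      (∀ s ∈ D, |F' s - G' s| ≤ δ) → extFn F' D C x - δ ≤ extFn G' D C x := by
    intro F' G' hF' hδ'
    refine le_extFn hD fun s hs => ?_
    have h1 := extFn_le hC hF' hs x
    have h2 := (abs_le.mp (hδ' s hs)).2
    linarith
  have k1 := key F G hF hδ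
  have k2 := key G F hG (fun s hs => by rw [abs_sub_comm]; exact hδ s hs)
  rw [abs_sub_le_iff]
  constructor <;> linarith

end ExtFn

section UnifConv

lemma unif_conv {D : Set ℝ} (hDc : IsCompact D) {C : ℝ} (hC : 0 ≤ C)
    {F : ℕ → ℝ → ℝ} {G : ℝ → ℝ}
    (hlip : ∀ j, ∀ s ∈ D, ∀ t ∈ D, |F j s - F j t| ≤ C * |s - t|)
    (hconv : ∀ t ∈ D, Tendsto (fun j => F j t) atTop (𝓝 (G t)))
    {ε : ℝ} (hε : 0 < ε) : ∀ᶠ j in atTop, ∀ t ∈ D, |F j t - G t| ≤ ε := by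
  -- G is also C-Lipschitz on D
  have hGlip : ∀ s ∈ D, ∀ t ∈ D, |G s - G t| ≤ C * |s - t| := by
    intro s hs t ht
    have : Tendsto (fun j => |F j s - F j t|) atTop (𝓝 |G s - G t|) :=
      ((hconv s hs).sub (hconv t ht)).abs
    exact le_of_tendsto this (Eventually.of_forall fun j => hlip j s hs t ht)
  set δ : ℝ := ε / (3 * (C + 1)) with hδdef
  have hδ : 0 < δ := by positivity
  -- finite cover of D by balls of radius δ centered at points of D
  obtain ⟨T, hTD, hTfin, hTcov⟩ :=
    hDc.elim_finite_subcover_image (fun t (_ : t ∈ D) => Metric.isOpen_ball (x := t) (ε := δ))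
      (fun x hx => mem_iUnion₂.mpr ⟨x, hx, Metric.mem_ball_self hδ⟩)
  have hev : ∀ᶠ j in atTop, ∀ t ∈ T, |F j t - G t| ≤ ε / 3 := by
    rw [hTfin.eventually_all]
    intro t ht
    have := hconv t (hTD ht)
    have h3 : 0 < ε / 3 := by positivity
    filter_upwards [this.eventually (Metric.ball_mem_nhds (G t) h3)] with j hj
    rw [Real.dist_eq] at hj; exact hj.le
  filter_upwards [hev] with j hj t ht
  obtain ⟨t₀, ht₀T, ht₀⟩ := mem_iUnion₂.mp (hTcov ht)
  have ht₀D : t₀ ∈ D := hTD ht₀T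
  have hdist : |t - t₀| < δ := by rw [← Real.dist_eq]; exact ht₀
  have h1 : |F j t - F j t₀| ≤ C * δ := by
    refine (hlip j t ht t₀ ht₀D).trans ?_
    exact mul_le_mul_of_nonneg_left hdist.le hC
  have h2 : |G t₀ - G t| ≤ C * δ := by
    refine (hGlip t₀ ht₀D t ht).trans ?_
    rw [abs_sub_comm]
    exact mul_le_mul_of_nonneg_left hdist.le hC
  have h3 := hj t₀ ht₀T
  have hCδ : C * δ ≤ ε / 3 := by
    have hC1 : 0 < C + 1 := by linarith
    rw [hδdef, mul_div_assoc']
    rw [div_le_div_iff₀ (by positivity) (by norm_num)]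
    nlinarith
  calc |F j t - G t| = |(F j t - F j t₀) + (F j t₀ - G t₀) + (G t₀ - G t)| := by ring_nf
  _ ≤ |F j t - F j t₀| + |F j t₀ - G t₀| + |G t₀ - G t| := by
      exact (abs_add_le _ _).trans (by gcongr; exact abs_add_le _ _)
  _ ≤ ε / 3 + ε / 3 + ε / 3 := by gcongr <;> linarith
  _ = ε := by ring

end UnifConv

section LipFTC

lemma lip_abs_deriv_le {C : ℝ≥0} {g : ℝ → ℝ} (hg : LipschitzWith C g) (x : ℝ) :
    |deriv g x| ≤ C := by
  by_cases hd : DifferentiableAt ℝ g x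
  · have hsl := hasDerivAt_iff_tendsto_slope.mp hd.hasDerivAt
    refine le_of_tendsto hsl.abs ?_
    filter_upwards [self_mem_nhdsWithin] with y (hy : y ≠ x)
    rw [slope_def_field, abs_div,
      div_le_iff₀ (abs_pos.mpr (sub_ne_zero.mpr hy))]
    calc |g y - g x| = dist (g y) (g x) := (Real.dist_eq _ _).symm
    _ ≤ C * dist y x := hg.dist_le_mul y x
    _ = C * |y - x| := by rw [Real.dist_eq]
  · rw [deriv_zero_of_not_differentiableAt hd]; simpa using C.2

lemma tendsto_slope_seq {g : ℝ → ℝ} {v x : ℝ} (hg : HasDerivAt g v x) :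
    Tendsto (fun n : ℕ => (g (x + ((n : ℝ) + 1)⁻¹) - g x) / ((n : ℝ) + 1)⁻¹) atTop (𝓝 v) := by
  have h0 : Tendsto (fun n : ℕ => x + ((n : ℝ) + 1)⁻¹) atTop (𝓝[≠] x) := by
    rw [tendsto_nhdsWithin_iff]
    constructor
    · have hz : Tendsto (fun n : ℕ => ((n : ℝ) + 1)⁻¹) atTop (𝓝 0) := by
        simpa [one_div] using tendsto_one_div_add_atTop_nhds_zero_nat (𝕜 := ℝ)
      simpa using tendsto_const_nhds.add hz
    · refine Eventually.of_forall fun n => ?_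
      have hpos : (0:ℝ) < ((n : ℝ) + 1)⁻¹ := by positivity
      simp only [mem_compl_iff, mem_singleton_iff]
      intro hadd
      have : ((n : ℝ) + 1)⁻¹ = 0 := by linarith
      exact absurd this (ne_of_gt hpos)
  have hcomp := (hasDerivAt_iff_tendsto_slope.mp hg).comp h0
  refine hcomp.congr fun n => ?_
  rw [Function.comp_apply, slope_def_field]
  congr 1
  ring

lemma lipschitz_ftc {C : ℝ≥0} {g : ℝ → ℝ} (hg : LipschitzWith C g) (a b : ℝ) :
    ∫ x in a..b, deriv g x = g b - g a := by
  have hgc : Continuous g := hg.continuous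
  set u : ℕ → ℝ := fun n => ((n : ℝ) + 1)⁻¹ with hu
  have hupos : ∀ n, (0:ℝ) < u n := fun n => by rw [hu]; positivity
  have hInt : ∀ p q : ℝ, IntervalIntegrable g volume p q := fun p q =>
    hgc.intervalIntegrable p q
  -- the shifted-quotient integral identity
  have key : ∀ n, (∫ x in a..b, (g (x + u n) - g x) / u n) =
      (∫ x in b..(b + u n), g x) / u n - (∫ x in a..(a + u n), g x) / u n := by
    intro n
    have hIsum : ∀ p q r : ℝ, (∫ x in p..q, g x) + ∫ x in q..r, g x = ∫ x in p..r, g x :=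
      fun p q r => intervalIntegral.integral_add_adjacent_intervals (hInt p q) (hInt q r)
    have hc : Continuous fun x : ℝ => g (x + u n) := by continuity
    have h1 : (∫ x in a..b, (g (x + u n) - g x) / u n)
        = ((∫ x in a..b, g (x + u n)) - ∫ x in a..b, g x) / u n := by
      rw [intervalIntegral.integral_div, intervalIntegral.integral_sub
        (hc.intervalIntegrable a b) (hInt a b)]
    rw [h1, intervalIntegral.integral_comp_add_right]
    have e1 := hIsum a (a + u n) (b + u n)
    have e2 := hIsum a b (b + u n)
    field_simp
    congr 1; linarith
  -- RHS limits
  have hRHS : ∀ y : ℝ, Tendsto (fun n => (∫ x in y..(y + u n), g x) / u n) atTop (𝓝 (g y)) := by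
    intro y
    have hG : HasDerivAt (fun t => ∫ x in y..t, g x) (g y) y :=
      intervalIntegral.integral_hasDerivAt_right (hInt y y)
        (hgc.stronglyMeasurableAtFilter _ _) hgc.continuousAt
    have h2 := tendsto_slope_seq hG
    rw [hu]
    refine h2.congr fun n => ?_
    rw [intervalIntegral.integral_same, sub_zero]
  -- LHS limit via dominated convergence
  have hLHS : Tendsto (fun n => ∫ x in a..b, (g (x + u n) - g x) / u n) atTop
      (𝓝 (∫ x in a..b, deriv g x)) := by
    apply intervalIntegral.tendsto_integral_filter_of_dominated_convergence
      (fun _ => (C : ℝ))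
    · exact Eventually.of_forall fun n =>
        (((hgc.comp (by continuity)).sub hgc).div_const _).aestronglyMeasurable
    · refine Eventually.of_forall fun n => Eventually.of_forall fun x _ => ?_
      have hb : |g (x + u n) - g x| ≤ C * u n := by
        calc |g (x + u n) - g x| = dist (g (x + u n)) (g x) := (Real.dist_eq _ _).symm
        _ ≤ C * dist (x + u n) x := hg.dist_le_mul _ _
        _ = C * u n := by rw [Real.dist_eq, add_sub_cancel_left, abs_of_pos (hupos n)]
      rw [Real.norm_eq_abs, abs_div, abs_of_pos (hupos n), div_le_iff₀ (hupos n)]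
      exact hb
    · exact intervalIntegrable_const
    · have hae : ∀ᵐ x : ℝ, DifferentiableAt ℝ g x := hg.ae_differentiableAt
      filter_upwards [hae] with x hx _
      exact tendsto_slope_seq hx.hasDerivAt
  have hR : Tendsto (fun n => (∫ x in b..(b + u n), g x) / u n
      - (∫ x in a..(a + u n), g x) / u n) atTop (𝓝 (g b - g a)) :=
    (hRHS b).sub (hRHS a)
  rw [funext key] at hLHS
  exact tendsto_nhds_unique hLHS hR

end LipFTC

section WeakStar

lemma intervalIntegrable_deriv_of_lip {C : ℝ≥0} {g : ℝ → ℝ} (hg : LipschitzWith C g)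
    (p q : ℝ) : IntervalIntegrable (deriv g) volume p q := by
  rw [intervalIntegrable_iff]
  refine Integrable.mono' (intervalIntegrable_iff.mp
    (intervalIntegrable_const (c := (C : ℝ)) (μ := volume) (a := p) (b := q)))
    ((measurable_deriv _).aestronglyMeasurable) ?_
  exact Eventually.of_forall fun x => by
    rw [Real.norm_eq_abs]; exact lip_abs_deriv_le hg x

lemma integrable_mul_deriv {C : ℝ≥0} {g : ℝ → ℝ} (hg : LipschitzWith C g)
    {h : ℝ → ℝ} (hh : Integrable h volume) :
    Integrable (fun x => h x * deriv g x) volume := by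
  have : Integrable (fun x => deriv g x * h x) volume := by
    refine hh.bdd_mul (c := (C : ℝ)) ((measurable_deriv _).aestronglyMeasurable) (Eventually.of_forall fun x => ?_)
    rw [Real.norm_eq_abs]; exact lip_abs_deriv_le hg x
  simpa [mul_comm] using this

lemma riemann_close {C : ℝ≥0} {g : ℝ → ℝ} (hg : LipschitzWith C g)
    {h₀ : ℝ → ℝ} (hc : Continuous h₀) (a : ℕ → ℝ) (m : ℕ) {ε' : ℝ} (hε' : 0 ≤ ε')
    (hstep : ∀ k < m, a k ≤ a (k + 1))
    (hosc : ∀ k < m, ∀ x ∈ Ioc (a k) (a (k + 1)), |h₀ x - h₀ (a k)| ≤ ε') :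
    |(∫ x in (a 0)..(a m), h₀ x * deriv g x)
      - ∑ k ∈ Finset.range m, h₀ (a k) * (g (a (k + 1)) - g (a k))|
      ≤ ∑ k ∈ Finset.range m, ε' * C * (a (k + 1) - a k) := by
  have hint : ∀ p q : ℝ, IntervalIntegrable (fun x => h₀ x * deriv g x) volume p q := by
    intro p q
    exact (intervalIntegrable_deriv_of_lip hg p q).continuousOn_mul hc.continuousOn
  have hsplit : (∫ x in (a 0)..(a m), h₀ x * deriv g x)
      = ∑ k ∈ Finset.range m, ∫ x in (a k)..(a (k + 1)), h₀ x * deriv g x := by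
    exact (intervalIntegral.sum_integral_adjacent_intervals fun k _ => hint _ _).symm
  rw [hsplit, ← Finset.sum_sub_distrib]
  refine (Finset.abs_sum_le_sum_abs _ _).trans (Finset.sum_le_sum fun k hk => ?_)
  have hkm := Finset.mem_range.mp hk
  have hle := hstep k hkm
  have heq : (∫ x in (a k)..(a (k + 1)), h₀ x * deriv g x)
        - h₀ (a k) * (g (a (k + 1)) - g (a k))
      = ∫ x in (a k)..(a (k + 1)), (h₀ x - h₀ (a k)) * deriv g x := by
    rw [← lipschitz_ftc hg (a k) (a (k + 1)), ← intervalIntegral.integral_const_mul,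
      ← intervalIntegral.integral_sub (hint _ _)
        ((intervalIntegrable_deriv_of_lip hg _ _).const_mul _)]
    congr 1; ext x; ring
  rw [heq]
  have hnorm : ∀ x ∈ Set.uIoc (a k) (a (k + 1)), ‖(h₀ x - h₀ (a k)) * deriv g x‖ ≤ ε' * C := by
    intro x hx
    rw [uIoc_of_le hle] at hx
    rw [Real.norm_eq_abs, abs_mul]
    exact mul_le_mul (hosc k hkm x hx) (lip_abs_deriv_le hg x) (abs_nonneg _) hε'
  have := intervalIntegral.norm_integral_le_of_norm_le_const hnorm
  rw [Real.norm_eq_abs] at this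
  refine this.trans ?_
  rw [abs_of_nonneg (by linarith : (0:ℝ) ≤ a (k + 1) - a k)]

end WeakStar

section WeakStar2

lemma weakstar_cc {C : ℝ≥0} {g : ℕ → ℝ → ℝ} {G : ℝ → ℝ}
    (hgj : ∀ j, LipschitzWith C (g j)) (hG : LipschitzWith C G)
    (hconv : ∀ x, Tendsto (fun j => g j x) atTop (𝓝 (G x)))
    {h₀ : ℝ → ℝ} (hc : Continuous h₀) (hsupp : HasCompactSupport h₀) :
    Tendsto (fun j => ∫ x, h₀ x * deriv (g j) x) atTop (𝓝 (∫ x, h₀ x * deriv G x)) := by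
  obtain ⟨r, hr⟩ := hsupp.isBounded.subset_closedBall 0
  set R := max r 1 with hRdef
  have hR0 : (0:ℝ) < R := lt_of_lt_of_le one_pos (le_max_right _ _)
  have hsub : tsupport h₀ ⊆ Icc (-R) R := by
    refine hr.trans ?_
    intro x hx
    rw [Metric.mem_closedBall, Real.dist_eq, sub_zero] at hx
    have hx' := abs_le.mp (hx.trans (le_max_left r 1))
    exact ⟨hx'.1, hx'.2⟩
  have hzero : ∀ x, x ∉ Icc (-R) R → h₀ x = 0 := fun x hx =>
    image_eq_zero_of_notMem_tsupport fun hmem => hx (hsub hmem)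
  have hpair : ∀ (g' : ℝ → ℝ), LipschitzWith C g' →
      (∫ x, h₀ x * deriv g' x) = ∫ x in (-R)..R, h₀ x * deriv g' x := by
    intro g' hg'
    rw [intervalIntegral.integral_of_le (by linarith : -R ≤ R),
      ← integral_Icc_eq_integral_Ioc,
      setIntegral_eq_integral_of_forall_compl_eq_zero
        (fun x hx => by rw [hzero x hx, zero_mul])]
  rw [hpair _ hG, funext fun j => hpair _ (hgj j)]
  rw [Metric.tendsto_atTop]
  intro ε hε
  have huc : UniformContinuous h₀ :=
    hc.uniformContinuous_of_tendsto_cocompact hsupp.is_zero_at_infty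
  set ε' : ℝ := ε / (4 * (2 * R * C + 1)) with hε'def
  have hε'pos : 0 < ε' := by positivity
  obtain ⟨δ, hδpos, hδ⟩ := Metric.uniformContinuous_iff.mp huc ε' hε'pos
  obtain ⟨n, hn⟩ := exists_nat_gt (2 * R / δ)
  set m := n + 1 with hmdef
  have hmpos : (0:ℝ) < (m:ℝ) := by positivity
  set w : ℝ := 2 * R / (m:ℝ) with hwdef
  have hwpos : 0 < w := by positivity
  have hwδ : w < δ := by
    have h1 : 2 * R / δ < (m:ℝ) := hn.trans (by exact_mod_cast Nat.lt_succ_self n)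
    have h2 : 2 * R < (m:ℝ) * δ := by
      rw [div_lt_iff₀ hδpos] at h1; linarith
    rw [hwdef, div_lt_iff₀ hmpos]; linarith
  set a : ℕ → ℝ := fun k => -R + k * w with hadef
  have ha0 : a 0 = -R := by simp [hadef]
  have ham : a m = R := by
    rw [hadef]; simp only []
    rw [hwdef]
    field_simp
    ring
  have hstep : ∀ k, a k ≤ a (k + 1) := by
    intro k
    rw [hadef]
    simp only []
    push_cast
    nlinarith [hwpos]
  have hastep : ∀ k, a (k + 1) - a k = w := by
    intro k
    rw [hadef]; simp only []; push_cast; ring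
  have hosc : ∀ k, ∀ x ∈ Ioc (a k) (a (k + 1)), |h₀ x - h₀ (a k)| ≤ ε' := by
    intro k x hx
    have hdist : dist x (a k) < δ := by
      rw [Real.dist_eq, abs_of_nonneg (by linarith [hx.1.le] : (0:ℝ) ≤ x - a k)]
      have := hx.2
      have := hastep k
      linarith
    have := hδ hdist
    rw [Real.dist_eq] at this
    exact this.le
  -- Riemann sums
  set P : (ℝ → ℝ) → ℝ := fun g' => ∑ k ∈ Finset.range m, h₀ (a k) * (g' (a (k + 1)) - g' (a k))
    with hPdef
  have hriemann : ∀ (g' : ℝ → ℝ), LipschitzWith C g' →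
      |(∫ x in (-R)..R, h₀ x * deriv g' x) - P g'| ≤ ε / 4 := by
    intro g' hg'
    have := riemann_close hg' hc a m hε'pos.le (fun k _ => hstep k) (fun k _ => hosc k)
    rw [ha0, ham] at this
    refine this.trans ?_
    have hsum : ∑ k ∈ Finset.range m, ε' * (C:ℝ) * (a (k + 1) - a k)
        = ε' * (C:ℝ) * (2 * R) := by
      rw [← Finset.mul_sum, Finset.sum_range_sub, ham, ha0]; ring
    rw [hsum, hε'def]
    rw [div_mul_eq_mul_div, div_mul_eq_mul_div, div_le_div_iff₀ (by positivity) (by norm_num)]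
    nlinarith [C.coe_nonneg, hε.le, hR0.le,
      mul_nonneg (mul_nonneg hε.le C.coe_nonneg) hR0.le]
  have hPtends : Tendsto (fun j => P (g j)) atTop (𝓝 (P G)) := by
    rw [hPdef]
    refine tendsto_finset_sum _ fun k _ => ?_
    exact ((hconv (a (k + 1))).sub (hconv (a k))).const_mul _
  obtain ⟨N, hN⟩ := Metric.tendsto_atTop.mp hPtends (ε / 4) (by positivity)
  refine ⟨N, fun j hj => ?_⟩
  have h1 := hriemann _ (hgj j)
  have h2 := hriemann _ hG
  have h3 := hN j hj
  rw [Real.dist_eq] at h3 ⊢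
  calc |(∫ x in (-R)..R, h₀ x * deriv (g j) x) - ∫ x in (-R)..R, h₀ x * deriv G x|
      = |((∫ x in (-R)..R, h₀ x * deriv (g j) x) - P (g j)) + (P (g j) - P G)
        + (P G - ∫ x in (-R)..R, h₀ x * deriv G x)| := by ring_nf
  _ ≤ |(∫ x in (-R)..R, h₀ x * deriv (g j) x) - P (g j)| + |P (g j) - P G|
        + |P G - ∫ x in (-R)..R, h₀ x * deriv G x| :=
      (abs_add_le _ _).trans (by gcongr; exact abs_add_le _ _)
  _ < ε := by
      rw [abs_sub_comm (P G)] at *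
      linarith

end WeakStar2

section WeakStar3

lemma weakstar {C : ℝ≥0} {g : ℕ → ℝ → ℝ} {G : ℝ → ℝ}
    (hgj : ∀ j, LipschitzWith C (g j)) (hG : LipschitzWith C G)
    (hconv : ∀ x, Tendsto (fun j => g j x) atTop (𝓝 (G x)))
    {h : ℝ → ℝ} (hh : Integrable h volume) :
    Tendsto (fun j => ∫ x, h x * deriv (g j) x) atTop (𝓝 (∫ x, h x * deriv G x)) := by
  rw [Metric.tendsto_atTop]
  intro ε hε
  set ε' : ℝ := ε / (4 * ((C:ℝ) + 1)) with hε'def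
  have hε'pos : 0 < ε' := by positivity
  obtain ⟨h₀, h₀supp, h₀close, h₀cont, h₀int⟩ :=
    hh.exists_hasCompactSupport_integral_sub_le hε'pos
  have key : ∀ (g' : ℝ → ℝ), LipschitzWith C g' →
      |(∫ x, h x * deriv g' x) - ∫ x, h₀ x * deriv g' x| ≤ ε / 4 := by
    intro g' hg'
    rw [← integral_sub (integrable_mul_deriv hg' hh) (integrable_mul_deriv hg' h₀int)]
    have heq : ∀ x, h x * deriv g' x - h₀ x * deriv g' x = (h x - h₀ x) * deriv g' x :=
      fun x => by ring
    simp_rw [heq]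
    have h1 : |∫ x, (h x - h₀ x) * deriv g' x| ≤ ∫ x, ‖(h x - h₀ x) * deriv g' x‖ := by
      rw [← Real.norm_eq_abs]
      exact norm_integral_le_integral_norm _
    refine h1.trans ?_
    have h2 : ∫ x, ‖(h x - h₀ x) * deriv g' x‖ ≤ ∫ x, (C:ℝ) * ‖h x - h₀ x‖ := by
      refine integral_mono_of_nonneg (Eventually.of_forall fun x => norm_nonneg _)
        (((hh.sub h₀int).norm).const_mul _) (Eventually.of_forall fun x => ?_)
      show ‖(h x - h₀ x) * deriv g' x‖ ≤ (C:ℝ) * ‖h x - h₀ x‖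
      rw [norm_mul]
      rw [mul_comm ((C:ℝ)) _]
      refine mul_le_mul_of_nonneg_left ?_ (norm_nonneg _)
      rw [Real.norm_eq_abs]
      exact lip_abs_deriv_le hg' x
    refine h2.trans ?_
    rw [MeasureTheory.integral_const_mul]
    have h3 : (C:ℝ) * ∫ x, ‖h x - h₀ x‖ ≤ (C:ℝ) * ε' :=
      mul_le_mul_of_nonneg_left h₀close C.coe_nonneg
    refine h3.trans ?_
    rw [hε'def, mul_div_assoc']
    rw [div_le_div_iff₀ (by positivity) (by norm_num)]
    nlinarith [C.coe_nonneg, hε.le]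
  have hcc := weakstar_cc hgj hG hconv h₀cont h₀supp
  obtain ⟨N, hN⟩ := Metric.tendsto_atTop.mp hcc (ε / 4) (by positivity)
  refine ⟨N, fun j hj => ?_⟩
  have h1 := key _ (hgj j)
  have h2 := key _ hG
  have h3 := hN j hj
  rw [Real.dist_eq] at h3 ⊢
  calc |(∫ x, h x * deriv (g j) x) - ∫ x, h x * deriv G x|
      = |((∫ x, h x * deriv (g j) x) - ∫ x, h₀ x * deriv (g j) x)
        + ((∫ x, h₀ x * deriv (g j) x) - ∫ x, h₀ x * deriv G x)
        + ((∫ x, h₀ x * deriv G x) - ∫ x, h x * deriv G x)| := by ring_nf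
  _ ≤ |(∫ x, h x * deriv (g j) x) - ∫ x, h₀ x * deriv (g j) x|
        + |(∫ x, h₀ x * deriv (g j) x) - ∫ x, h₀ x * deriv G x|
        + |(∫ x, h₀ x * deriv G x) - ∫ x, h x * deriv G x| :=
      (abs_add_le _ _).trans (by gcongr; exact abs_add_le _ _)
  _ < ε := by
      rw [abs_sub_comm (∫ x, h₀ x * deriv G x)] at *
      linarith

end WeakStar3

section AccPt

lemma ae_acc_of_restrict (D : Set ℝ) :
    ∀ᵐ t ∂(volume.restrict D), (𝓝[D \ {t}] t).NeBot := by
  filter_upwards [Besicovitch.ae_tendsto_measure_inter_div volume D] with t ht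
  rw [← mem_closure_iff_nhdsWithin_neBot]
  rw [Metric.mem_closure_iff]
  intro ε hε
  have hev : ∀ᶠ r in 𝓝[>] (0:ℝ),
      volume (D ∩ Metric.closedBall t r) / volume (Metric.closedBall t r) ≠ 0 :=
    ht.eventually_ne one_ne_zero
  have hev2 : ∀ᶠ r in 𝓝[>] (0:ℝ), r < ε := by
    refine eventually_nhdsWithin_of_eventually_nhds ?_
    exact tendsto_id.eventually_lt_const hε
  obtain ⟨r, hrne, hrε, hrpos⟩ := (hev.and (hev2.and self_mem_nhdsWithin)).exists
  have hnum : volume (D ∩ Metric.closedBall t r) ≠ 0 := by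
    intro h0
    rw [h0, ENNReal.zero_div] at hrne
    exact hrne rfl
  have hseteq : (D \ {t}) ∩ Metric.closedBall t r = (D ∩ Metric.closedBall t r) \ {t} := by
    ext x
    simp only [mem_diff, mem_inter_iff, mem_singleton_iff]
    tauto
  have hne2 : volume ((D \ {t}) ∩ Metric.closedBall t r) ≠ 0 := by
    rw [hseteq, measure_diff_null (Real.volume_singleton)]
    exact hnum
  obtain ⟨b, hb⟩ := nonempty_of_measure_ne_zero hne2
  refine ⟨b, hb.1, ?_⟩
  have hbd : dist b t ≤ r := Metric.mem_closedBall.mp hb.2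
  rw [dist_comm]
  exact hbd.trans_lt hrε

end AccPt

section Identify

lemma deriv_eq_along {D : Set ℝ} {F : ℝ → ℝ} {t v : ℝ}
    (hne : (𝓝[D \ {t}] t).NeBot)
    (hdiff : DifferentiableAt ℝ F t)
    (halong : Tendsto (fun s => (F s - F t) / (s - t)) (𝓝[D \ {t}] t) (𝓝 v)) :
    deriv F t = v := by
  haveI := hne
  have h1 : Tendsto (slope F t) (𝓝[≠] t) (𝓝 (deriv F t)) :=
    hasDerivAt_iff_tendsto_slope.mp hdiff.hasDerivAt
  have h2 : Tendsto (slope F t) (𝓝[D \ {t}] t) (𝓝 (deriv F t)) :=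
    h1.mono_left (nhdsWithin_mono _ fun x hx => hx.2)
  have h3 : Tendsto (slope F t) (𝓝[D \ {t}] t) (𝓝 v) :=
    halong.congr fun s => (slope_def_field F t s).symm
  exact tendsto_nhds_unique h2 h3

end Identify

namespace CurveFragment

variable {X : Type*} [MetricSpace X]

/-- `f ∘ γ` has derivative `v` at `t` (limit taken along the domain). -/
def HasDerivAlong (γ : CurveFragment X) (f : X → ℝ) (t v : ℝ) : Prop :=
  Tendsto (fun s => (f (γ.toFun s) - f (γ.toFun t)) / (s - t)) (𝓝[γ.dom \ {t}] t) (𝓝 v)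

end CurveFragment

/-- Weak* continuity of derivatives along a curve fragment: if uniformly
Lipschitz functions `f_j` converge pointwise to a Lipschitz `f`, then for every
`h ∈ L¹(dom γ)` the integrals `∫ h (f_j ∘ γ)' dt` converge to `∫ h (f ∘ γ)' dt`. -/
theorem deriv_along_weakStar_convergence {X : Type*} [MetricSpace X]
    (γ : CurveFragment X)
    (f : X → ℝ) (hf : ∃ K : ℝ≥0, LipschitzWith K f)
    (fj : ℕ → X → ℝ) (K : ℝ≥0) (hfj : ∀ j, LipschitzWith K (fj j))
    (hpt : ∀ x, Tendsto (fun j => fj j x) atTop (𝓝 (f x)))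
    (d : ℕ → ℝ → ℝ)
    (hd : ∀ j, ∀ᵐ t ∂(volume.restrict γ.dom), γ.HasDerivAlong (fj j) t (d j t))
    (df : ℝ → ℝ)
    (hdf : ∀ᵐ t ∂(volume.restrict γ.dom), γ.HasDerivAlong f t (df t))
    (h : ℝ → ℝ) (hh : Integrable h (volume.restrict γ.dom)) :
    Tendsto (fun j => ∫ t in γ.dom, h t * d j t) atTop
      (𝓝 (∫ t in γ.dom, h t * df t)) := by
  obtain ⟨L, hL, hbi⟩ := γ.biLip
  obtain ⟨K', hK'⟩ := hf
  set D := γ.dom with hD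
  have hDmeas : MeasurableSet D := γ.compact.measurableSet
  set Creal : ℝ := ((K : ℝ) + (K' : ℝ) + 1) * L with hCdef
  have hK0 := K.coe_nonneg
  have hK'0 := K'.coe_nonneg
  have hC0 : 0 < Creal := by rw [hCdef]; nlinarith
  -- Lipschitz-on-D facts for the compositions
  have hcomp : ∀ (φ : X → ℝ) (Kφ : ℝ≥0), LipschitzWith Kφ φ → (Kφ : ℝ) ≤ (K:ℝ) + K' + 1 →
      ∀ s ∈ D, ∀ t ∈ D, |φ (γ.toFun s) - φ (γ.toFun t)| ≤ Creal * |s - t| := by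
    intro φ Kφ hφ hKφ s hs t ht
    have h1 : dist (φ (γ.toFun s)) (φ (γ.toFun t)) ≤ Kφ * dist (γ.toFun s) (γ.toFun t) :=
      hφ.dist_le_mul _ _
    have h2 := (hbi s hs t ht).2
    rw [Real.dist_eq] at h1
    have h3 : dist (γ.toFun s) (γ.toFun t) ≤ L * |s - t| := h2
    have h4 : (0:ℝ) ≤ Kφ := Kφ.coe_nonneg
    have h5 : (0:ℝ) ≤ dist (γ.toFun s) (γ.toFun t) := dist_nonneg
    have h6 : (0:ℝ) ≤ |s - t| := abs_nonneg _
    rw [hCdef]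
    nlinarith
  have hFlip : ∀ j, ∀ s ∈ D, ∀ t ∈ D,
      |fj j (γ.toFun s) - fj j (γ.toFun t)| ≤ Creal * |s - t| :=
    fun j => hcomp (fj j) K (hfj j) (by nlinarith)
  have hGlip : ∀ s ∈ D, ∀ t ∈ D, |f (γ.toFun s) - f (γ.toFun t)| ≤ Creal * |s - t| :=
    hcomp f K' hK' (by nlinarith)
  -- Lipschitz extensions
  set g : ℕ → ℝ → ℝ := fun j => extFn (fun s => fj j (γ.toFun s)) D Creal with hgdef
  set G : ℝ → ℝ := extFn (fun s => f (γ.toFun s)) D Creal with hGdef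
  have hgjlip : ∀ j, LipschitzWith Creal.toNNReal (g j) := fun j =>
    LipschitzWith.of_dist_le_mul fun x y => by
      rw [Real.dist_eq, Real.dist_eq, Real.coe_toNNReal _ hC0.le]
      exact extFn_lip γ.nonempty hC0.le (hFlip j) x y
  have hGlipW : LipschitzWith Creal.toNNReal G :=
    LipschitzWith.of_dist_le_mul fun x y => by
      rw [Real.dist_eq, Real.dist_eq, Real.coe_toNNReal _ hC0.le]
      exact extFn_lip γ.nonempty hC0.le hGlip x y
  -- pointwise convergence of the extensions
  have hgconv : ∀ x, Tendsto (fun j => g j x) atTop (𝓝 (G x)) := by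
    intro x
    rw [Metric.tendsto_atTop]
    intro ε hε
    have huc := unif_conv γ.compact hC0.le hFlip
      (fun t _ => hpt (γ.toFun t)) (half_pos hε)
    rw [eventually_atTop] at huc
    obtain ⟨N, hN⟩ := huc
    refine ⟨N, fun j hj => ?_⟩
    have hcl := extFn_close γ.nonempty hC0.le (hFlip j) hGlip (hN j hj) x
    rw [Real.dist_eq]
    calc |g j x - G x| ≤ ε / 2 := hcl
    _ < ε := half_lt_self hε
  -- a.e. identification of d j with deriv (g j)
  have hid : ∀ j, (fun t => d j t) =ᵐ[volume.restrict D] fun t => deriv (g j) t := by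
    intro j
    have h1 : ∀ᵐ t ∂(volume.restrict D), DifferentiableAt ℝ (g j) t :=
      ae_restrict_of_ae (hgjlip j).ae_differentiableAt
    filter_upwards [hd j, h1, ae_acc_of_restrict D, ae_restrict_mem hDmeas]
      with t hdt hdiff hne htD
    have halong : Tendsto (fun s => (g j s - g j t) / (s - t)) (𝓝[D \ {t}] t) (𝓝 (d j t)) := by
      refine hdt.congr' ?_
      filter_upwards [self_mem_nhdsWithin] with s hs
      simp only [hgdef]
      rw [extFn_eqOn γ.nonempty hC0.le (hFlip j) hs.1,
        extFn_eqOn γ.nonempty hC0.le (hFlip j) htD]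
    exact (deriv_eq_along hne hdiff halong).symm
  have hidf : (fun t => df t) =ᵐ[volume.restrict D] fun t => deriv G t := by
    have h1 : ∀ᵐ t ∂(volume.restrict D), DifferentiableAt ℝ G t :=
      ae_restrict_of_ae hGlipW.ae_differentiableAt
    filter_upwards [hdf, h1, ae_acc_of_restrict D, ae_restrict_mem hDmeas]
      with t hdt hdiff hne htD
    have halong : Tendsto (fun s => (G s - G t) / (s - t)) (𝓝[D \ {t}] t) (𝓝 (df t)) := by
      refine hdt.congr' ?_
      filter_upwards [self_mem_nhdsWithin] with s hs
      simp only [hGdef]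
      rw [extFn_eqOn γ.nonempty hC0.le hGlip hs.1,
        extFn_eqOn γ.nonempty hC0.le hGlip htD]
    exact (deriv_eq_along hne hdiff halong).symm
  -- rewrite the integrals
  have hindrw : ∀ (u : ℝ → ℝ), D.indicator (fun t => h t * u t)
      = fun x => (D.indicator h) x * u x := by
    intro u
    funext x
    by_cases hx : x ∈ D
    · rw [indicator_of_mem hx, indicator_of_mem hx]
    · rw [indicator_of_notMem hx, indicator_of_notMem hx, zero_mul]
  have hrw : ∀ j, (∫ t in D, h t * d j t) = ∫ x, (D.indicator h) x * deriv (g j) x := by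
    intro j
    have step1 : (∫ t in D, h t * d j t) = ∫ t in D, h t * deriv (g j) t :=
      integral_congr_ae ((hid j).mono fun t ht => by
        show h t * d j t = h t * deriv (g j) t
        rw [show d j t = deriv (g j) t from ht])
    rw [step1, ← integral_indicator hDmeas, hindrw]
  have hrwG : (∫ t in D, h t * df t) = ∫ x, (D.indicator h) x * deriv G x := by
    have step1 : (∫ t in D, h t * df t) = ∫ t in D, h t * deriv G t :=
      integral_congr_ae (hidf.mono fun t ht => by
        show h t * df t = h t * deriv G t
        rw [show df t = deriv G t from ht])
    rw [step1, ← integral_indicator hDmeas, hindrw]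
  have hint : Integrable (D.indicator h) volume := (integrable_indicator_iff hDmeas).mpr hh
  have := weakstar hgjlip hGlipW hgconv hint
  rw [show (fun j => ∫ t in γ.dom, h t * d j t)
      = fun j => ∫ x, (D.indicator h) x * deriv (g j) x from funext hrw, hrwG]
  exact this
end
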